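/- arXiv:2506.22104 — 3 statements merged into one kernel-verified Lean document; each statement's English description precedes it below -/
import Mathlib

section
/- Let FinPtd denote the category of pointed finite sets and FinPtd^int its wide subcategory of inert maps. A functor M : FinPtd → Set satisfies the Segal condition if and only if the restriction of M to FinPtd^int is a (pointwise) right Kan extension of its restriction to the full subcategory {1₊} of FinPtd^int. -/
/-!
STATEMENT 6: Let `FinPtd` denote the category of pointed finite sets and `FinPtd^int`
its wide subcategory of inert maps.  A functor `M : FinPtd → Set` satisfies the Segal
condition if and only if the restriction of `M` to `FinPtd^int` is a (pointwise) right
Kan extension of its restriction to the full subcategory `{1₊}` of `FinPtd^int`.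
-/

open CategoryTheory

/-- The category of pointed finite sets. -/
structure FinPtd : Type 1 where
  carrier : Type
  [fin : Fintype carrier]
  pt : carrier

attribute [instance] FinPtd.fin

instance : Category FinPtd where
  Hom X Y := {f : X.carrier → Y.carrier // f X.pt = Y.pt}
  id X := ⟨id, rfl⟩
  comp f g := ⟨g.1 ∘ f.1, by simp [f.2, g.2]⟩
  id_comp f := Subtype.ext rfl
  comp_id f := Subtype.ext rfl
  assoc f g h := Subtype.ext rfl

/-- `A₊`: the pointed finite set obtained from a finite set `A` by freely adjoining a
basepoint `∞ = none`. -/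
def FinPtd.plusObj (A : Type) [Fintype A] : FinPtd := ⟨Option A, none⟩

/-- `1₊`, the pointed set with one non-basepoint element. -/
def FinPtd.one : FinPtd := FinPtd.plusObj PUnit

/-- The pointed map `ρ_a : A₊ → 1₊` sending `a` to the non-basepoint element and
everything else to the basepoint. -/
noncomputable def FinPtd.rho (A : Type) [Fintype A] (a : A) :
    FinPtd.plusObj A ⟶ FinPtd.one :=
  ⟨fun x => @ite _ (x = some a) (Classical.propDecidable _) (some PUnit.unit) none, by
    simp [FinPtd.plusObj, FinPtd.one]⟩

/-- The Segal condition for a `Set`-valued functor on `FinPtd`. -/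
def SegalCondition (M : FinPtd ⥤ Type) : Prop :=
  ∀ (A : Type) [Fintype A],
    Function.Bijective (fun m : M.obj (FinPtd.plusObj A) => fun a : A =>
      M.map (FinPtd.rho A a) m)

/-- A pointed map `f : A₊ → B₊` is inert if every non-basepoint element of the target
has exactly one preimage. -/
def FinPtd.Inert {X Y : FinPtd} (f : X ⟶ Y) : Prop :=
  ∀ b : Y.carrier, b ≠ Y.pt → ∃! a : X.carrier, f.1 a = b

/-- The wide subcategory of `FinPtd` on the inert maps. -/
structure FinPtdInt : Type 1 where
  obj : FinPtd

instance : Category FinPtdInt where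
  Hom X Y := {f : X.obj ⟶ Y.obj // FinPtd.Inert f}
  id X := ⟨𝟙 X.obj, fun b hb => ⟨b, rfl, fun a ha => ha⟩⟩
  comp {X Y Z} f g := ⟨f.1 ≫ g.1, by
    intro c hc
    obtain ⟨b, hb, hbu⟩ := g.2 c hc
    have hbne : b ≠ Y.obj.pt := by
      rintro rfl
      exact hc (hb.symm.trans g.1.2)
    obtain ⟨a, ha, hau⟩ := f.2 b hbne
    refine ⟨a, ?_, fun a' ha' => hau a' (hbu _ ha')⟩
    show g.1.1 (f.1.1 a) = c
    rw [ha, hb]⟩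
  id_comp f := Subtype.ext (Subtype.ext rfl)
  comp_id f := Subtype.ext (Subtype.ext rfl)
  assoc f g h := Subtype.ext (Subtype.ext rfl)

/-- The inclusion of the wide subcategory of inert maps. -/
def intIncl : FinPtdInt ⥤ FinPtd where
  obj X := X.obj
  map f := f.1
  map_id _ := rfl
  map_comp _ _ := rfl

/-- The object `1₊` of `FinPtd^int`. -/
def FinPtdInt.one : FinPtdInt := ⟨FinPtd.one⟩

/-- The inclusion of the full subcategory `{1₊} ⊆ FinPtd^int`. -/
def oneIncl : ObjectProperty.FullSubcategory (fun X : FinPtdInt => X = FinPtdInt.one) ⥤ FinPtdInt :=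
  ObjectProperty.ι _

/-! ### Auxiliary material -/

/-- The non-basepoint elements of a pointed finite set. -/
abbrev NePt (X : FinPtd) : Type := {y : X.carrier // y ≠ X.pt}

noncomputable instance (X : FinPtd) : Fintype (NePt X) := Fintype.ofFinite _

/-- Any non-basepoint element of `1₊` is `some PUnit.unit`. -/
lemma one_ne_pt (b : FinPtd.one.carrier) (hb : b ≠ FinPtd.one.pt) : b = some PUnit.unit := by
  cases b with
  | none => exact absurd rfl hb
  | some u => rfl

/-- The inert map `X ⟶ 1₊` selecting a non-basepoint element `x`. -/
noncomputable def sel (X : FinPtd) (x : NePt X) : X ⟶ FinPtd.one :=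
  ⟨fun y => @ite _ (y = x.1) (Classical.propDecidable _) (some PUnit.unit) none, by
    dsimp only
    exact @if_neg _ (Classical.propDecidable _) (fun h => x.2 h.symm) _ _ _⟩

lemma sel_apply_eq {X : FinPtd} (x : NePt X) {y : X.carrier} (h : y = x.1) :
    (sel X x).1 y = some PUnit.unit := by
  exact @if_pos _ (Classical.propDecidable _) h _ _ _

lemma sel_apply_ne {X : FinPtd} (x : NePt X) {y : X.carrier} (h : y ≠ x.1) :
    (sel X x).1 y = none := by
  exact @if_neg _ (Classical.propDecidable _) h _ _ _

lemma sel_inert (X : FinPtd) (x : NePt X) : FinPtd.Inert (sel X x) := by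
  intro b hb
  rw [one_ne_pt b hb]
  refine ⟨x.1, sel_apply_eq x rfl, fun y hy => ?_⟩
  by_contra h
  have hy' : (sel X x).1 y = some PUnit.unit := hy
  rw [sel_apply_ne x h] at hy'
  cases hy'

lemma inert_to_one {X : FinPtd} (f : X ⟶ FinPtd.one) (hf : FinPtd.Inert f) :
    ∃ x : NePt X, f = sel X x := by
  obtain ⟨a, ha, hu⟩ := hf (some PUnit.unit) (fun h => by cases h)
  have ha' : f.1 a = some PUnit.unit := ha
  have hpt : f.1 X.pt = none := f.2
  have hane : a ≠ X.pt := by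
    intro h
    rw [h, hpt] at ha'
    cases ha'
  refine ⟨⟨a, hane⟩, Subtype.ext (funext fun y => ?_)⟩
  by_cases h : y = a
  · rw [h, sel_apply_eq ⟨a, hane⟩ rfl]
    exact ha'
  · rw [sel_apply_ne _ h]
    cases hy : f.1 y with
    | none => rfl
    | some u =>
      cases u
      exact absurd (hu y hy) h

lemma sel_injective {X : FinPtd} {x x' : NePt X} (h : sel X x = sel X x') : x = x' := by
  have h1 : (sel X x').1 x.1 = some PUnit.unit := by rw [← h]; exact sel_apply_eq x rfl
  by_contra hne
  have hne' : x.1 ≠ x'.1 := fun h2 => hne (Subtype.ext h2)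
  rw [sel_apply_ne x' hne'] at h1
  cases h1

/-- Extract the selected element from an inert map to `1₊`. -/
noncomputable def cl {X : FinPtd} (f : X ⟶ FinPtd.one) (hf : FinPtd.Inert f) : NePt X :=
  (inert_to_one f hf).choose

lemma cl_spec {X : FinPtd} (f : X ⟶ FinPtd.one) (hf : FinPtd.Inert f) :
    f = sel X (cl f hf) := (inert_to_one f hf).choose_spec

lemma cl_sel {X : FinPtd} (x : NePt X) (h : FinPtd.Inert (sel X x)) :
    cl (sel X x) h = x := sel_injective (cl_spec (sel X x) h).symm

/-- Inert endomorphisms of `1₊` are the identity. -/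
lemma inert_one_endo (f : FinPtd.one ⟶ FinPtd.one) (hf : FinPtd.Inert f) :
    f = 𝟙 FinPtd.one := by
  obtain ⟨a, ha, _⟩ := hf (some PUnit.unit) (fun h => by cases h)
  have ha' : f.1 a = some PUnit.unit := ha
  have hpt : f.1 none = none := f.2
  have hsome : f.1 (some PUnit.unit) = some PUnit.unit := by
    cases a with
    | none =>
      rw [hpt] at ha'
      cases ha'
    | some u => cases u; exact ha'
  refine Subtype.ext (funext fun y => ?_)
  cases y with
  | none => exact hpt
  | some u => cases u; exact hsome

/-- The canonical map `X ⟶ (NePt X)₊`. -/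
noncomputable def canHom (X : FinPtd) : X ⟶ FinPtd.plusObj (NePt X) :=
  ⟨fun y => @dite _ (y = X.pt) (Classical.propDecidable _) (fun _ => none)
      (fun h => some ⟨y, h⟩), by
    dsimp only
    exact @dif_pos _ (Classical.propDecidable _) rfl _ _ _⟩

lemma canHom_apply_pt {X : FinPtd} {y : X.carrier} (h : y = X.pt) :
    (canHom X).1 y = none := by
  exact @dif_pos _ (Classical.propDecidable _) h _ _ _

lemma canHom_apply_ne {X : FinPtd} {y : X.carrier} (h : ¬(y = X.pt)) :
    (canHom X).1 y = some ⟨y, h⟩ := by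
  exact @dif_neg _ (Classical.propDecidable _) h _ _ _

/-- The canonical map `(NePt X)₊ ⟶ X`. -/
def canInv (X : FinPtd) : FinPtd.plusObj (NePt X) ⟶ X :=
  ⟨fun z => Option.elim z X.pt Subtype.val, rfl⟩

/-- The iso of a pointed finite set with its set of non-basepoints with a point adjoined. -/
noncomputable def canIso (X : FinPtd) : X ≅ FinPtd.plusObj (NePt X) where
  hom := canHom X
  inv := canInv X
  hom_inv_id := Subtype.ext (funext fun y => by
    show (canInv X).1 ((canHom X).1 y) = y
    by_cases h : y = X.pt
    · rw [canHom_apply_pt h]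
      exact h.symm
    · rw [canHom_apply_ne h]
      rfl)
  inv_hom_id := Subtype.ext (funext fun z => by
    show (canHom X).1 ((canInv X).1 z) = z
    cases z with
    | none => exact canHom_apply_pt rfl
    | some x =>
      show (canHom X).1 x.1 = some x
      rw [canHom_apply_ne x.2])

lemma sel_eq_canIso_rho (X : FinPtd) (x : NePt X) :
    sel X x = (canIso X).hom ≫ FinPtd.rho (NePt X) x := by
  refine Subtype.ext (funext fun y => ?_)
  show (sel X x).1 y = (FinPtd.rho (NePt X) x).1 ((canHom X).1 y)
  by_cases h : y = x.1
  · rw [sel_apply_eq x h]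
    have h2 : (canHom X).1 y = some x := by
      rw [canHom_apply_ne (h ▸ x.2)]
      exact congrArg some (Subtype.ext h)
    rw [h2]
    exact (@if_pos _ (Classical.propDecidable _) rfl _ _ _).symm
  · rw [sel_apply_ne x h]
    have h2 : (canHom X).1 y ≠ some x := by
      by_cases h' : y = X.pt
      · rw [canHom_apply_pt h']
        exact fun hc => by cases hc
      · rw [canHom_apply_ne h']
        intro hc
        exact h (congrArg Subtype.val (Option.some_injective _ hc))
    simp only [FinPtd.rho]
    exact (@if_neg _ (Classical.propDecidable _) h2 _ _ _).symm

/-- The Segal condition gives a bijection for every pointed finite set. -/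
lemma segal_bij {M : FinPtd ⥤ Type} (hM : SegalCondition M) (X : FinPtd) :
    Function.Bijective (fun m : M.obj X => fun x : NePt X => M.map (sel X x) m) := by
  have key : (fun m : M.obj X => fun x : NePt X => M.map (sel X x) m) =
      (fun n : M.obj (FinPtd.plusObj (NePt X)) => fun x : NePt X =>
        M.map (FinPtd.rho (NePt X) x) n) ∘ (M.map (canIso X).hom) := by
    funext m x
    show M.map (sel X x) m = M.map (FinPtd.rho (NePt X) x) (M.map (canIso X).hom m)
    rw [sel_eq_canIso_rho, M.map_comp]
    rfl
  rw [key]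
  exact (hM (NePt X)).comp ((M.mapIso (canIso X)).toEquiv.bijective)

/-- The canonical object of the full subcategory `{1₊}`. -/
def oneObj : ObjectProperty.FullSubcategory (fun X : FinPtdInt => X = FinPtdInt.one) := ⟨FinPtdInt.one, rfl⟩

/-- The inert selector as a morphism in `FinPtd^int`. -/
noncomputable def selInt (X : FinPtdInt) (x : NePt X.obj) : X ⟶ FinPtdInt.one :=
  ⟨sel X.obj x, sel_inert X.obj x⟩

/-- The structured arrow corresponding to a non-basepoint element. -/
noncomputable def jx (X : FinPtdInt) (x : NePt X.obj) :
    StructuredArrow X oneIncl :=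
  StructuredArrow.mk (Y := oneObj) (selInt X x)

section Main

variable (M : FinPtd ⥤ Type)

/-- Abbreviation for the right extension under consideration. -/
noncomputable def EM : Functor.RightExtension oneIncl (oneIncl ⋙ intIncl ⋙ M) :=
  Functor.RightExtension.mk (intIncl ⋙ M) (𝟙 (oneIncl ⋙ intIncl ⋙ M))

lemma coneAt_app_jx (X : FinPtdInt) (x : NePt X.obj) (m : M.obj X.obj) :
    ((EM M).coneAt X).π.app (jx X x) m = M.map (sel X.obj x) m := rfl

/-- Every structured arrow is of the form `jx`. -/
lemma structuredArrow_eq (X : FinPtdInt) (j : StructuredArrow X oneIncl) :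
    ∃ x : NePt X.obj, j = jx X x := by
  obtain ⟨⟨⟨⟩⟩, ⟨Y, hY⟩, f⟩ := j
  subst hY
  obtain ⟨x, hx⟩ := inert_to_one f.1 f.2
  refine ⟨x, ?_⟩
  show StructuredArrow.mk (Y := oneObj) f = StructuredArrow.mk (Y := oneObj) (selInt X x)
  exact congrArg (StructuredArrow.mk (Y := oneObj)) (Subtype.ext hx)

/-- Segal ⟹ pointwise right Kan extension. -/
noncomputable def isLimitOfSegal (hM : SegalCondition M) (X : FinPtdInt) :
    Limits.IsLimit ((EM M).coneAt X) := by
  set e : M.obj X.obj ≃ (NePt X.obj → M.obj FinPtd.one) :=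
    Equiv.ofBijective _ (segal_bij hM X.obj) with he
  exact
    { lift := fun s => TypeCat.ofHom (fun t => e.symm (fun x => s.π.app (jx X x) t))
      fac := fun s j => by
        obtain ⟨x, rfl⟩ := structuredArrow_eq X j
        ext t
        show M.map (sel X.obj x) (e.symm (fun x => s.π.app (jx X x) t)) = s.π.app (jx X x) t
        exact congrFun (e.apply_symm_apply (fun x => s.π.app (jx X x) t)) x
      uniq := fun s m hm => by
        ext t
        apply e.injective
        funext x
        show e (m t) x = e (e.symm (fun x => s.π.app (jx X x) t)) x
        refine Eq.trans ?_ (congrFun (e.apply_symm_apply _) x).symm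
        exact types_congr_hom (hm (jx X x)) t }

/-- Pointwise right Kan extension at `X` ⟹ bijectivity of the `sel`-family map at `X`. -/
lemma bij_of_isLimit (X : FinPtdInt)
    (hX : Limits.IsLimit ((EM M).coneAt X)) :
    Function.Bijective (fun m : M.obj X.obj => fun x : NePt X.obj =>
      M.map (sel X.obj x) m) := by
  constructor
  · intro m m' hmm
    let c : Limits.Cone (StructuredArrow.proj X oneIncl ⋙ oneIncl ⋙ intIncl ⋙ M) :=
      { pt := PUnit
        π :=
          { app := fun j => TypeCat.ofHom (fun _ => ((EM M).coneAt X).π.app j m)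
            naturality := fun j j' φ => by
              ext u
              exact (types_congr_hom (((EM M).coneAt X).w φ) m).symm } }
    have facm : ∀ j, TypeCat.ofHom (fun _ : PUnit => m) ≫ ((EM M).coneAt X).π.app j = c.π.app j :=
      fun j => rfl
    have facm' : ∀ j, TypeCat.ofHom (fun _ : PUnit => m') ≫ ((EM M).coneAt X).π.app j = c.π.app j := by
      intro j
      obtain ⟨x, rfl⟩ := structuredArrow_eq X j
      ext u
      show M.map (sel X.obj x) m' = M.map (sel X.obj x) m
      exact (congrFun hmm x).symm
    have huniq := (hX.uniq c _ facm).trans (hX.uniq c _ facm').symm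
    exact types_congr_hom huniq PUnit.unit
  · intro fam
    let c : Limits.Cone (StructuredArrow.proj X oneIncl ⋙ oneIncl ⋙ intIncl ⋙ M) :=
      { pt := PUnit
        π :=
          { app := fun j => TypeCat.ofHom (fun _ =>
              M.map (intIncl.map (eqToHom j.right.property.symm))
                (fam (cl (j.hom ≫ eqToHom j.right.property).1
                  (j.hom ≫ eqToHom j.right.property).2)))
            naturality := fun j j' φ => by
              obtain ⟨x, rfl⟩ := structuredArrow_eq X j
              obtain ⟨x', rfl⟩ := structuredArrow_eq X j'
              have hφ : φ.right = 𝟙 oneObj :=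
                ObjectProperty.hom_ext _ (Subtype.ext (inert_one_endo φ.right.hom.1 φ.right.hom.2))
              have hw := StructuredArrow.w φ
              rw [hφ] at hw
              have hxx : x = x' :=
                sel_injective (congrArg Subtype.val (show selInt X x = selInt X x' from hw))
              subst hxx
              have hφ' : φ = 𝟙 (jx X x) := StructuredArrow.hom_ext _ _ hφ
              rw [hφ']
              simp
              exact (Category.comp_id _).symm.trans
                (congrArg (fun g => _ ≫ g) ((oneIncl ⋙ intIncl ⋙ M).map_id (jx X x).right).symm) } }
    refine ⟨hX.lift c PUnit.unit, funext fun x => ?_⟩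
    have hfac : M.map (sel X.obj x) (hX.lift c PUnit.unit) = c.π.app (jx X x) PUnit.unit :=
      types_congr_hom (hX.fac c (jx X x)) PUnit.unit
    show M.map (sel X.obj x) (hX.lift c PUnit.unit) = fam x
    rw [hfac]
    show M.map (𝟙 FinPtd.one)
      (fam (cl (sel X.obj x) ((selInt X x) ≫ eqToHom rfl).2)) = fam x
    rw [M.map_id]
    show fam (cl (sel X.obj x) _) = fam x
    exact congrArg fam (cl_sel x _)

end Main

/-- Extract the underlying element of `A` from a non-basepoint of `A₊`. -/
noncomputable def getA {A : Type} [Fintype A] (x : NePt (FinPtd.plusObj A)) : A :=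
  x.1.get (Option.ne_none_iff_isSome.1 x.2)

lemma getA_spec {A : Type} [Fintype A] (x : NePt (FinPtd.plusObj A)) :
    (some (getA x) : Option A) = x.1 := Option.some_get _

theorem segal_iff_rightKanExtension_from_one (M : FinPtd ⥤ Type) :
    SegalCondition M ↔
      Nonempty ((Functor.RightExtension.mk (intIncl ⋙ M)
          (𝟙 (oneIncl ⋙ intIncl ⋙ M))).IsPointwiseRightKanExtension) := by
  constructor
  · intro hM
    exact ⟨fun X => isLimitOfSegal M hM X⟩
  · rintro ⟨h⟩ A _
    have hb := bij_of_isLimit M ⟨FinPtd.plusObj A⟩ (h ⟨FinPtd.plusObj A⟩)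
    set X : FinPtd := FinPtd.plusObj A with hX
    have hrho : ∀ a : A, FinPtd.rho A a =
        sel X ⟨some a, fun hc => by cases hc⟩ :=
      fun a => Subtype.ext (funext fun y => rfl)
    have key : (fun m : M.obj X => fun a : A => M.map (FinPtd.rho A a) m) =
        (fun g : NePt X → M.obj FinPtd.one => fun a : A =>
          g ⟨some a, fun hc => by cases hc⟩) ∘
        (fun m : M.obj X => fun x : NePt X => M.map (sel X x) m) := by
      funext m a
      show M.map (FinPtd.rho A a) m = M.map (sel X ⟨some a, _⟩) m
      rw [hrho]
    rw [key]
    refine Function.Bijective.comp ?_ hb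
    constructor
    · intro g g' hgg
      funext x
      have hx : (⟨some (getA x), fun hc => by cases hc⟩ : NePt X) = x :=
        Subtype.ext (getA_spec x)
      rw [← hx]
      exact congrFun hgg (getA x)
    · intro g
      exact ⟨fun x => g (getA x), funext fun a => rfl⟩
end

section
/- If f : Γ → Λ and g : Λ → Ξ are combinatorial graph maps between connected graphs, then the pair (g_v ∘ f_v, f_a ∘ g_a) is a combinatorial graph map Γ → Ξ. Together with the identity maps, connected graphs and combinatorial graph maps form a category. -/
/-- A graph: finite sets `V` of vertices and `A` of arcs (half-edges), a fixed-point
free involution `† = dag` on arcs, and an endpoint map `t : A → V ⊔ {∞}`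
(we encode `V ⊔ {∞}` as `Option V` with `∞ = none`). -/
structure CGraph : Type 1 where
  V : Type
  A : Type
  [fintypeV : Fintype V]
  [fintypeA : Fintype A]
  dag : A → A
  dag_dag : ∀ a, dag (dag a) = a
  dag_ne : ∀ a, dag a ≠ a
  t : A → Option V

attribute [instance] CGraph.fintypeV CGraph.fintypeA

namespace CGraph

/-- The generating relation on `V ⊔ A`: an arc touches its `†`-partner, and an arc
touches its endpoint (when the endpoint is a vertex). -/
inductive Touch (G : CGraph) : (G.V ⊕ G.A) → (G.V ⊕ G.A) → Prop
  | dag (a : G.A) : Touch G (Sum.inr a) (Sum.inr (G.dag a))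
  | incid (a : G.A) (v : G.V) : G.t a = some v → Touch G (Sum.inr a) (Sum.inl v)

/-- A graph is connected if `V ⊔ A` is nonempty and the equivalence relation generated
by `Touch` has exactly one equivalence class. -/
def Connected (G : CGraph) : Prop :=
  Nonempty (G.V ⊕ G.A) ∧ ∀ x y : G.V ⊕ G.A, Relation.EqvGen G.Touch x y

/-- The valence of a vertex: the number of arcs ending at it. -/
noncomputable def valence (G : CGraph) (v : G.V) : ℕ :=
  Nat.card {a : G.A // G.t a = some v}

/-- A vertex is bivalent if exactly two arcs end at it. -/
def Bivalent (G : CGraph) (v : G.V) : Prop := G.valence v = 2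

/-- `x ∈ V ⊔ {∞}` is bivalent or `∞`. -/
def BivAt (G : CGraph) (x : Option G.V) : Prop :=
  x = none ∨ ∃ v, x = some v ∧ G.Bivalent v

/-- `IsPath G l s e`: the list of arcs `l = [a₁, …, aₙ]` is a path from `s` to `e`:
`t(a₁†) = s`, `t(aᵢ) = t(aᵢ₊₁†)` for `i < n`, and `t(aₙ) = e`; the empty path is a
path from `s` to `e` exactly when `s = e`. -/
def IsPath (G : CGraph) : List G.A → Option G.V → Option G.V → Prop
  | [], s, e => s = e
  | a :: l, s, e => G.t (G.dag a) = s ∧ G.IsPath l (G.t a) e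

/-- A path is bivalent if each of its intermediate vertices `t(aᵢ)`, `i < n`, is
bivalent or `∞`. -/
def IsBivalentPath (G : CGraph) (l : List G.A) (s e : Option G.V) : Prop :=
  G.IsPath l s e ∧
    ∀ (i : ℕ) (h : i + 1 < l.length), G.BivAt (G.t (l.get ⟨i, Nat.lt_of_succ_lt h⟩))

/-- The underlying data of a combinatorial graph map `Γ → Λ`: a basepoint-preserving
map on vertices-with-∞ and a map on arcs in the opposite direction. -/
structure PreMap (G H : CGraph) : Type where
  fv : Option G.V → Option H.V
  fa : H.A → G.A

/-- `FiberList f a l`: the list `l` enumerates `f_a⁻¹(a)` (without repetitions) and is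
a bivalent path in the target graph between the images of the endpoints of `a`
(oriented so that the identity map is a graph map). -/
def FiberList {G H : CGraph} (f : PreMap G H) (a : G.A) (l : List H.A) : Prop :=
  (∀ b : H.A, b ∈ l ↔ f.fa b = a) ∧ l.Nodup ∧
    H.IsBivalentPath l (f.fv (G.t (G.dag a))) (f.fv (G.t a))

/-- `MidVertexOf H l w`: `w` occurs as an intermediate vertex of the path `l`. -/
def MidVertexOf (H : CGraph) (l : List H.A) (w : H.V) : Prop :=
  ∃ (i : ℕ) (h : i + 1 < l.length), H.t (l.get ⟨i, Nat.lt_of_succ_lt h⟩) = some w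

/-- `OnFiberPath f w a`: the vertex `w` of the target occurs as an intermediate vertex
of the bivalent path enumerating `f_a⁻¹(a)`. -/
def OnFiberPath {G H : CGraph} (f : PreMap G H) (w : H.V) (a : G.A) : Prop :=
  ∃ l : List H.A, FiberList f a l ∧ MidVertexOf H l w

/-- The conditions for a pair `(f_v, f_a)` to be a combinatorial graph map:
(1) `f_v(∞) = ∞`; (2) `f_a` commutes with `†`; (3) each `f_a⁻¹(a)` admits an ordering
making it a bivalent path between the images of the endpoints of `a`; (4) vertices
identified by `f_v` are joined by a path of arcs outside the image of `f_a`;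
(5) each vertex of the target not in the image of `f_v` is bivalent and occurs as an
intermediate vertex of exactly one of the bivalent paths from (3) (where the paths of
an arc and of its `†`-partner are regarded as the same path). -/
def IsGraphMap {G H : CGraph} (f : PreMap G H) : Prop :=
  f.fv none = none ∧
  (∀ b : H.A, f.fa (H.dag b) = G.dag (f.fa b)) ∧
  (∀ a : G.A, ∃ l : List H.A, FiberList f a l) ∧
  (∀ v v' : G.V, f.fv (some v) = f.fv (some v') → f.fv (some v) ≠ none →
    ∃ l : List G.A, (∀ c ∈ l, c ∉ Set.range f.fa) ∧ G.IsPath l (some v) (some v')) ∧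
  (∀ w : H.V, (∀ v : G.V, f.fv (some v) ≠ some w) →
    H.Bivalent w ∧ ∃ a : G.A, OnFiberPath f w a ∧
      ∀ a' : G.A, OnFiberPath f w a' → a' = a ∨ a' = G.dag a)

/-- The identity pre-map. -/
def PreMap.id (G : CGraph) : PreMap G G := ⟨fun x => x, fun a => a⟩

/-- Composition of pre-maps: `f` first, then `g`. -/
def PreMap.comp {G H K : CGraph} (f : PreMap G H) (g : PreMap H K) : PreMap G K :=
  ⟨g.fv ∘ f.fv, f.fa ∘ g.fa⟩

/-- A combinatorial graph map is inert if `f_v⁻¹(w)` has exactly one element for every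
vertex `w` of the target, and `f_a⁻¹(a)` is empty only when `f_v(t(a)) = ∞`. -/
def IsInert {G H : CGraph} (f : PreMap G H) : Prop :=
  (∀ w : H.V, ∃! v : G.V, f.fv (some v) = some w) ∧
  (∀ a : G.A, (∀ b : H.A, f.fa b ≠ a) → f.fv (G.t a) = none)

/-- A combinatorial graph map is active if `f_v⁻¹(∞) = {∞}` and none of the bivalent
paths `f_a⁻¹(a)` passes through `∞`. -/
def IsActive {G H : CGraph} (f : PreMap G H) : Prop :=
  (∀ x : Option G.V, f.fv x = none → x = none) ∧
  (∀ (a : G.A) (l : List H.A), FiberList f a l →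
    ∀ (i : ℕ) (h : i + 1 < l.length), H.t (l.get ⟨i, Nat.lt_of_succ_lt h⟩) ≠ none)

/-- An isomorphism of graphs: a graph map with a two-sided inverse graph map. -/
def IsGraphIso {G H : CGraph} (f : PreMap G H) : Prop :=
  IsGraphMap f ∧ ∃ g : PreMap H G, IsGraphMap g ∧
    f.comp g = PreMap.id G ∧ g.comp f = PreMap.id H

end CGraph

namespace CGraph

variable {G H K : CGraph}

/-! ### Basic path lemmas -/

theorem isPath_nil {s e : Option G.V} : G.IsPath [] s e ↔ s = e := Iff.rfl

theorem isPath_cons {c : G.A} {l : List G.A} {s e : Option G.V} :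
    G.IsPath (c :: l) s e ↔ G.t (G.dag c) = s ∧ G.IsPath l (G.t c) e := Iff.rfl

theorem isPath_append : ∀ {l₁ l₂ : List G.A} {s m e : Option G.V},
    G.IsPath l₁ s m → G.IsPath l₂ m e → G.IsPath (l₁ ++ l₂) s e := by
  intro l₁
  induction l₁ with
  | nil =>
    intro l₂ s m e h₁ h₂
    exact (isPath_nil.mp h₁) ▸ h₂
  | cons c l ih =>
    intro l₂ s m e h₁ h₂
    exact ⟨h₁.1, ih h₁.2 h₂⟩

theorem isPath_split : ∀ {l₁ l₂ : List G.A} {s e : Option G.V},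
    G.IsPath (l₁ ++ l₂) s e → ∃ m, G.IsPath l₁ s m ∧ G.IsPath l₂ m e := by
  intro l₁
  induction l₁ with
  | nil => exact fun h => ⟨_, rfl, h⟩
  | cons c l ih =>
    intro l₂ s e h
    obtain ⟨m, h1, h2⟩ := ih h.2
    exact ⟨m, ⟨h.1, h1⟩, h2⟩

theorem isPath_end_unique : ∀ {l : List G.A} {s e₁ e₂ : Option G.V},
    G.IsPath l s e₁ → G.IsPath l s e₂ → e₁ = e₂ := by
  intro l
  induction l with
  | nil => exact fun h1 h2 => (isPath_nil.mp h1).symm.trans (isPath_nil.mp h2)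
  | cons c l ih => exact fun h1 h2 => ih h1.2 h2.2

theorem isPath_getLast : ∀ {l : List G.A} {s e : Option G.V} (h : G.IsPath l s e)
    (hne : l ≠ []), G.t (l.getLast hne) = e := by
  intro l
  induction l with
  | nil => exact fun _ hne => absurd rfl hne
  | cons c l ih =>
    intro s e h hne
    cases l with
    | nil => exact isPath_nil.mp h.2 ▸ rfl
    | cons d l' => rw [List.getLast_cons (by simp)]; exact ih h.2 (by simp)

theorem isPath_head : ∀ {l : List G.A} {s e : Option G.V} (h : G.IsPath l s e)
    (hne : 0 < l.length), G.t (G.dag (l[0]'hne)) = s := by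
  intro l s e h hne
  cases l with
  | nil => simp at hne
  | cons c l => exact h.1

theorem isPath_consec : ∀ {l : List G.A} {s e : Option G.V} (h : G.IsPath l s e)
    {i : ℕ} (hi : i + 1 < l.length),
    G.t (l[i]'(by omega)) = G.t (G.dag (l[i + 1]'hi)) := by
  intro l
  induction l with
  | nil => intro s e h i hi; simp at hi
  | cons c l ih =>
    intro s e h i hi
    cases i with
    | zero =>
      simp only [List.getElem_cons_zero, List.getElem_cons_succ]
      exact (isPath_head h.2 (by simpa using hi)).symm
    | succ i =>
      simp only [List.getElem_cons_succ]
      exact ih h.2 (by simpa using hi)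

theorem isPath_take : ∀ {l : List G.A} {s e : Option G.V} (h : G.IsPath l s e)
    {k : ℕ} (hk : k < l.length),
    G.IsPath (l.take (k + 1)) s (G.t (l[k]'hk)) := by
  intro l
  induction l with
  | nil => intro s e h k hk; simp at hk
  | cons c l ih =>
    intro s e h k hk
    cases k with
    | zero => exact ⟨h.1, rfl⟩
    | succ k =>
      simp only [List.take_succ_cons, List.getElem_cons_succ]
      exact ⟨h.1, ih h.2 (by simpa using hk)⟩

/-! ### Split-based characterizations -/

theorem isBivalentPath_iff {l : List G.A} {s e : Option G.V} :
    G.IsBivalentPath l s e ↔ G.IsPath l s e ∧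
      ∀ l₁ (c : G.A) l₂, l = l₁ ++ c :: l₂ → l₂ ≠ [] → G.BivAt (G.t c) := by
  constructor
  · rintro ⟨hp, hmid⟩
    refine ⟨hp, ?_⟩
    rintro l₁ c l₂ rfl hl₂
    have hlen : l₁.length + 1 < (l₁ ++ c :: l₂).length := by
      simp only [List.length_append, List.length_cons]
      cases l₂ with
      | nil => exact absurd rfl hl₂
      | cons d l₂' => simp only [List.length_cons]; omega
    have := hmid l₁.length hlen
    rw [List.get_eq_getElem] at this
    have hg : (l₁ ++ c :: l₂)[l₁.length]'(by omega) = c := by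
      rw [List.getElem_append_right le_rfl]
      simp
    rwa [hg] at this
  · rintro ⟨hp, hmid⟩
    refine ⟨hp, ?_⟩
    intro i hi
    have hlt : i < l.length := by omega
    have hsplit : l = l.take i ++ l[i] :: l.drop (i + 1) := by
      conv_lhs => rw [← List.take_append_drop i l]
      rw [List.drop_eq_getElem_cons hlt]
    have hne : l.drop (i + 1) ≠ [] := by
      rw [ne_eq, List.drop_eq_nil_iff]; omega
    have := hmid _ _ _ hsplit hne
    rwa [List.get_eq_getElem]

theorem midVertexOf_iff {l : List H.A} {w : H.V} :
    MidVertexOf H l w ↔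
      ∃ (l₁ : List H.A) (c : H.A) (l₂ : List H.A), l = l₁ ++ c :: l₂ ∧ l₂ ≠ [] ∧ H.t c = some w := by
  constructor
  · rintro ⟨i, hi, hv⟩
    have hlt : i < l.length := by omega
    refine ⟨l.take i, l[i]'hlt, l.drop (i + 1), ?_, ?_, ?_⟩
    · conv_lhs => rw [← List.take_append_drop i l]
      rw [List.drop_eq_getElem_cons hlt]
    · rw [ne_eq, List.drop_eq_nil_iff]; omega
    · rw [List.get_eq_getElem] at hv; exact hv
  · rintro ⟨l₁, c, l₂, rfl, hl₂, hv⟩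
    have hlen : l₁.length + 1 < (l₁ ++ c :: l₂).length := by
      simp only [List.length_append, List.length_cons]
      cases l₂ with
      | nil => exact absurd rfl hl₂
      | cons d l₂' => simp only [List.length_cons]; omega
    refine ⟨l₁.length, hlen, ?_⟩
    rw [List.get_eq_getElem]
    have hg : (l₁ ++ c :: l₂)[l₁.length]'(by omega) = c := by
      rw [List.getElem_append_right le_rfl]; simp
    rw [hg]; exact hv

theorem append_cons_inj {α : Type*} : ∀ (l₁ J₁ : List α) {c : α} {l₂ J₂ : List α},
    l₁ ++ c :: l₂ = J₁ ++ c :: J₂ → c ∉ l₁ → c ∉ J₁ → l₁ = J₁ ∧ l₂ = J₂ := by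
  intro l₁
  induction l₁ with
  | nil =>
    intro J₁ c l₂ J₂ h h1 h2
    cases J₁ with
    | nil => simpa using h
    | cons d J =>
      simp only [List.nil_append, List.cons_append, List.cons.injEq] at h
      exact absurd (h.1 ▸ List.mem_cons_self (a := d) (l := J)) h2
  | cons a l ih =>
    intro J₁ c l₂ J₂ h h1 h2
    cases J₁ with
    | nil =>
      simp only [List.nil_append, List.cons_append, List.cons.injEq] at h
      exact absurd (h.1 ▸ List.mem_cons_self (a := a) (l := l)) h1
    | cons b J =>
      simp only [List.cons_append, List.cons.injEq] at h
      obtain ⟨rfl, h⟩ := h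
      obtain ⟨h3, h4⟩ := ih J h (fun hc => h1 (List.mem_cons_of_mem _ hc))
        (fun hc => h2 (List.mem_cons_of_mem _ hc))
      exact ⟨by rw [h3], h4⟩

/-! ### Valence -/

theorem two_arcs {x : G.V} (hb : G.Bivalent x) {c₁ c₂ : G.A}
    (h1 : G.t c₁ = some x) (h2 : G.t c₂ = some x) (hne : c₁ ≠ c₂) :
    ∀ c, G.t c = some x → c = c₁ ∨ c = c₂ := by
  intro c hc
  rw [Bivalent, valence, Nat.card_eq_two_iff] at hb
  obtain ⟨p, q, hpq, huniv⟩ := hb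
  have hmem : ∀ d : {a : G.A // G.t a = some x}, d = p ∨ d = q := by
    intro d
    have : d ∈ ({p, q} : Set {a : G.A // G.t a = some x}) := huniv ▸ Set.mem_univ d
    simpa using this
  have key : ∀ d : {a : G.A // G.t a = some x}, d = ⟨c₁, h1⟩ ∨ d = ⟨c₂, h2⟩ := by
    intro d
    have hd := hmem d
    have ha := hmem ⟨c₁, h1⟩
    have hb' := hmem ⟨c₂, h2⟩
    have hab : (⟨c₁, h1⟩ : {a : G.A // G.t a = some x}) ≠ ⟨c₂, h2⟩ := by
      simp [Subtype.ext_iff]; exact hne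
    rcases ha with ha | ha <;> rcases hb' with hb' | hb' <;>
      rcases hd with hd | hd <;> simp_all
  rcases key ⟨c, hc⟩ with h | h
  · exact Or.inl (congrArg Subtype.val h)
  · exact Or.inr (congrArg Subtype.val h)

theorem bivalent_of_two {x : G.V} {c₁ c₂ : G.A}
    (h1 : G.t c₁ = some x) (h2 : G.t c₂ = some x) (hne : c₁ ≠ c₂)
    (hall : ∀ c, G.t c = some x → c = c₁ ∨ c = c₂) : G.Bivalent x := by
  rw [Bivalent, valence, Nat.card_eq_two_iff]
  refine ⟨⟨c₁, h1⟩, ⟨c₂, h2⟩, by simp [Subtype.ext_iff]; exact hne, ?_⟩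
  apply Set.eq_univ_of_forall
  rintro ⟨c, hc⟩
  rcases hall c hc with rfl | rfl
  · exact Set.mem_insert _ _
  · exact Set.mem_insert_of_mem _ rfl

end CGraph

namespace CGraph

variable {G H K : CGraph}

/-! ### Fiber lemmas -/

theorem fiber_fa {f : PreMap G H} {a : G.A} {l : List H.A} (hl : FiberList f a l)
    {b : H.A} (hb : b ∈ l) : f.fa b = a := (hl.1 b).1 hb

theorem fiber_empty_iff {f : PreMap G H} {a : G.A} {l : List H.A}
    (hl : FiberList f a l) : l = [] ↔ a ∉ Set.range f.fa := by
  constructor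
  · rintro rfl ⟨c, rfl⟩
    exact absurd ((hl.1 c).2 rfl) (List.not_mem_nil (a := c))
  · intro h
    cases l with
    | nil => rfl
    | cons c l' => exact absurd ⟨c, (hl.1 c).1 (List.mem_cons_self (a := c) (l := l'))⟩ h

theorem not_range_fv_eq {f : PreMap G H} (hf : IsGraphMap f) {a : G.A}
    (ha : a ∉ Set.range f.fa) : f.fv (G.t (G.dag a)) = f.fv (G.t a) := by
  obtain ⟨l, hl⟩ := hf.2.2.1 a
  have : l = [] := (fiber_empty_iff hl).2 ha
  subst this
  exact hl.2.2.1

theorem dag_mem_range {f : PreMap G H} (hf : IsGraphMap f) {a : G.A}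
    (ha : a ∈ Set.range f.fa) : G.dag a ∈ Set.range f.fa := by
  obtain ⟨c, hc⟩ := ha
  exact ⟨H.dag c, by rw [hf.2.1, hc]⟩

theorem dag_not_range {f : PreMap G H} (hf : IsGraphMap f) {a : G.A}
    (ha : a ∉ Set.range f.fa) : G.dag a ∉ Set.range f.fa := by
  rintro ⟨c, hc⟩
  exact ha ⟨H.dag c, by rw [hf.2.1, hc, G.dag_dag]⟩

theorem dag_mem_fiber {f : PreMap G H} (hf : IsGraphMap f) {a : G.A} {b : H.A}
    {l l' : List H.A} (hl : FiberList f a l) (hl' : FiberList f (G.dag a) l')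
    (hb : b ∈ l) : H.dag b ∈ l' := by
  apply (hl'.1 _).2
  rw [hf.2.1, fiber_fa hl hb]

/-! ### Image vertices are never mid vertices of fibers -/

theorem not_mid_image (hG : G.Connected) {f : PreMap G H} (hf : IsGraphMap f)
    {a : G.A} {m : List H.A} (hm : FiberList f a m) {i : ℕ} (hi : i + 1 < m.length)
    {x : H.V} (hx : H.t (m[i]'(by omega)) = some x)
    {y : G.V} (hy : f.fv (some y) = some x) : False := by
  classical
  have hmem := hm.1
  have hnd := hm.2.1
  have hpath := hm.2.2.1
  have hmid := hm.2.2.2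
  -- x is bivalent
  have hxbiv : H.Bivalent x := by
    have := hmid i hi
    rw [List.get_eq_getElem, hx] at this
    rcases this with h | ⟨v, hv, hbv⟩
    · exact absurd h (by simp)
    · exact (Option.some_injective _ hv).symm ▸ hbv
  -- the two arcs at x
  set c₁ : H.A := m[i]'(by omega) with hc₁def
  set c₂ : H.A := H.dag (m[i + 1]'hi) with hc₂def
  have ht₂ : H.t c₂ = some x := by rw [← isPath_consec hpath hi]; exact hx
  have hfa₁ : f.fa c₁ = a := fiber_fa hm (List.getElem_mem _)
  have hfa₂ : f.fa c₂ = G.dag a := by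
    rw [hc₂def, hf.2.1, fiber_fa hm (List.getElem_mem _)]
  have hnec : c₁ ≠ c₂ := by
    intro h
    apply G.dag_ne a
    rw [← hfa₂, ← h, hfa₁]
  have harcs := two_arcs hxbiv hx ht₂ hnec
  -- the cluster of y
  set Cl : Set G.V :=
    {z | ∃ l, (∀ c ∈ l, c ∉ Set.range f.fa) ∧ G.IsPath l (some y) (some z)} with hCldef
  have hyCl : y ∈ Cl := ⟨[], by simp, rfl⟩
  have cluster_img : ∀ (l : List G.A) (q₀ q₁ : Option G.V),
      (∀ c ∈ l, c ∉ Set.range f.fa) → G.IsPath l q₀ q₁ →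
      f.fv q₀ = some x → f.fv q₁ = some x := by
    intro l
    induction l with
    | nil => intro q₀ q₁ _ hp h0; exact isPath_nil.mp hp ▸ h0
    | cons c l ih =>
      intro q₀ q₁ hemp hp h0
      refine ih _ _ (fun c' hc' => hemp c' (List.mem_cons_of_mem _ hc')) hp.2 ?_
      rw [← not_range_fv_eq hf (hemp c (List.mem_cons_self (a := c) (l := l))), hp.1, h0]
  have himg : ∀ z ∈ Cl, f.fv (some z) = some x := by
    rintro z ⟨l, hl, hp⟩
    exact cluster_img l _ _ hl hp hy
  by_cases hA : ∃ z ∈ Cl, ∃ b : G.A, G.t b = some z ∧ b ∈ Set.range f.fa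
  · obtain ⟨z, hz, b, hbz, hbr⟩ := hA
    obtain ⟨lb, hlb⟩ := hf.2.2.1 b
    have hlbne : lb ≠ [] := by
      intro h0
      exact (fiber_empty_iff hlb).1 h0 hbr
    have hend : H.t (lb.getLast hlbne) = some x := by
      rw [isPath_getLast hlb.2.2.1 hlbne, hbz, himg z hz]
    have hlfa : f.fa (lb.getLast hlbne) = b := fiber_fa hlb (List.getLast_mem hlbne)
    have hmne : m ≠ [] := by intro h0; rw [h0] at hi; simp at hi
    rcases harcs _ hend with hc | hc
    · -- last of lb = c₁, so b = a and the end of m is at x: three arcs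
      have hba : b = a := by rw [← hlfa, hc, hfa₁]
      have hel : H.t (m.getLast hmne) = some x := by
        rw [isPath_getLast hpath hmne, ← hba, hbz, himg z hz]
      rcases harcs _ hel with h1 | h1
      · rw [List.getLast_eq_getElem, hc₁def, hnd.getElem_inj_iff] at h1
        omega
      · have e1 : f.fa (m.getLast hmne) = a := fiber_fa hm (List.getLast_mem hmne)
        rw [h1, hfa₂] at e1
        exact G.dag_ne a e1
    · -- last of lb = c₂, so b = dag a and the start of m is at x
      have hbda : b = G.dag a := by rw [← hlfa, hc, hfa₂]
      have h0m : 0 < m.length := by omega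
      have hst : H.t (H.dag (m[0]'h0m)) = some x := by
        rw [isPath_head hpath h0m]
        rw [hbda] at hbz
        rw [hbz, himg z hz]
      rcases harcs _ hst with h1 | h1
      · have e1 : f.fa (H.dag (m[0]'h0m)) = G.dag a := by
          rw [hf.2.1, fiber_fa hm (List.getElem_mem _)]
        rw [h1, hfa₁] at e1
        exact G.dag_ne a e1.symm
      · have e1 : m[0]'h0m = m[i + 1]'hi := by
          have := congrArg H.dag h1
          rwa [H.dag_dag, hc₂def, H.dag_dag] at this
        rw [hnd.getElem_inj_iff] at e1
        omega
  · push_neg at hA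
    set S : G.V ⊕ G.A → Prop := fun p =>
      match p with
      | Sum.inl z => z ∈ Cl
      | Sum.inr b => (∃ z ∈ Cl, G.t b = some z) ∨ (∃ z ∈ Cl, G.t (G.dag b) = some z)
      with hSdef
    have hext : ∀ z ∈ Cl, ∀ b : G.A, G.t (G.dag b) = some z → b ∉ Set.range f.fa →
        ∃ z', G.t b = some z' ∧ z' ∈ Cl := by
      rintro z ⟨l, hl, hp⟩ b hbz hbr
      have himgz : f.fv (some z) = some x := himg z ⟨l, hl, hp⟩
      have h1 : f.fv (G.t b) = some x := by
        rw [← not_range_fv_eq hf hbr, hbz, himgz]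
      cases hgt : G.t b with
      | none => rw [hgt, hf.1] at h1; exact absurd h1 (by simp)
      | some z' =>
        refine ⟨z', rfl, ⟨l ++ [b], ?_, ?_⟩⟩
        · intro c hc
          rcases List.mem_append.mp hc with h | h
          · exact hl c h
          · rw [List.mem_singleton] at h; exact h ▸ hbr
        · exact isPath_append hp (by exact ⟨hbz, hgt⟩)
    have hTouch : ∀ p q, G.Touch p q → (S p ↔ S q) := by
      rintro p q hpq
      cases hpq with
      | dag b =>
        show _ ↔ (∃ z ∈ Cl, G.t (G.dag b) = some z) ∨ (∃ z ∈ Cl, G.t (G.dag (G.dag b)) = some z)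
        rw [G.dag_dag]
        exact or_comm
      | incid b z hbz =>
        constructor
        · rintro (⟨z', hz', h'⟩ | ⟨z', hz', h'⟩)
          · rwa [(Option.some_injective _ (h'.symm.trans hbz) : z' = z)] at hz'
          · have hbnr : b ∉ Set.range f.fa := by
              intro hr
              exact hA z' hz' (G.dag b) h' (dag_mem_range hf hr)
            obtain ⟨z'', hz'', hzCl⟩ := hext z' hz' b h' hbnr
            rwa [(Option.some_injective _ (hz''.symm.trans hbz) : z'' = z)] at hzCl
        · intro hzS
          exact Or.inl ⟨z, hzS, hbz⟩
    have hEq : ∀ p q, Relation.EqvGen G.Touch p q → (S p ↔ S q) := by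
      intro p q hpq
      induction hpq with
      | rel _ _ h => exact hTouch _ _ h
      | refl => exact Iff.rfl
      | symm _ _ _ ih => exact ih.symm
      | trans _ _ _ _ _ ih₁ ih₂ => exact ih₁.trans ih₂
    have haS : S (Sum.inr a) := (hEq _ _ (hG.2 (Sum.inl y) (Sum.inr a))).1 hyCl
    rcases haS with ⟨z, hz, h'⟩ | ⟨z, hz, h'⟩
    · exact hA z hz a h' ⟨c₁, hfa₁⟩
    · exact hA z hz (G.dag a) h' ⟨c₂, hfa₂⟩

end CGraph

namespace CGraph

variable {G H K : CGraph}

theorem getLast_of_eq {α : Type*} {l p : List α} {c : α} (he : l = p ++ [c])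
    (hl : l ≠ []) : l.getLast hl = c := by
  subst he
  rw [List.getLast_append]
  simp

theorem tel_blocks {g : PreMap H K} (hg : IsGraphMap g) {L : H.A → List K.A}
    (hL : ∀ b, FiberList g b (L b)) {lf : List H.A} {s e : Option H.V}
    (hp : H.IsPath lf s e) :
    ∀ {p q : ℕ} (hpq : p ≤ q) (hq : q < lf.length),
      (∀ k (_ : p < k) (_ : k ≤ q), L (lf[k]'(by omega)) = []) →
      g.fv (H.t (lf[p]'(by omega))) = g.fv (H.t (lf[q]'hq)) := by
  intro p q hpq
  induction q, hpq using Nat.le_induction with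
  | base => intro hq hemp; rfl
  | succ q hq' ih =>
    intro hq1 hemp
    have e1 := ih (by omega) (fun k h1 h2 => hemp k h1 (by omega))
    have e2 : H.t (lf[q]'(by omega)) = H.t (H.dag (lf[q + 1]'hq1)) :=
      isPath_consec hp hq1
    have hnr : (lf[q + 1]'hq1) ∉ Set.range g.fa := by
      rw [← fiber_empty_iff (hL _)]
      exact hemp (q + 1) (by omega) le_rfl
    have e3 := not_range_fv_eq hg hnr
    rw [e1, e2, e3]

theorem junction_two (hH : H.Connected)
    {f : PreMap G H} {g : PreMap H K} (hf : IsGraphMap f) (hg : IsGraphMap g)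
    {L : H.A → List K.A} (hL : ∀ b, FiberList g b (L b))
    {a : G.A} {lf : List H.A} (hlf : FiberList f a lf)
    {j : ℕ} (hj : j + 1 < lf.length)
    {w : K.V} (hw : g.fv (H.t (lf[j]'(by omega))) = some w)
    {j₁ : ℕ} (hj₁ : j₁ ≤ j) (hne₁ : L (lf[j₁]'(by omega)) ≠ [])
    {j₂ : ℕ} (hj₂ : j < j₂) (hj₂' : j₂ < lf.length) (hne₂ : L (lf[j₂]'hj₂') ≠ []) :
    K.Bivalent w ∧
      ∀ c : K.A, K.t c = some w →
        f.fa (g.fa c) = a ∨ f.fa (g.fa c) = G.dag a := by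
  classical
  have hmem := hlf.1
  have hnd := hlf.2.1
  have hpath := hlf.2.2.1
  have hmid := hlf.2.2.2
  set B : ℕ → List K.A := fun k => if h : k < lf.length then L (lf[k]'h) else []
    with hBdef
  have hB : ∀ k (h : k < lf.length), B k = L (lf[k]'h) := fun k h => dif_pos h
  -- greatest nonempty block index ≤ j
  set P : ℕ → Prop := fun k => B k ≠ [] with hPdef
  set j' := Nat.findGreatest P j with hj'def
  have hj'P : B j' ≠ [] :=
    Nat.findGreatest_spec hj₁ (show P j₁ by show B j₁ ≠ []; rw [hB j₁ (by omega)]; exact hne₁)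
  have hj'le : j' ≤ j := Nat.findGreatest_le j
  have hj'max : ∀ k, j' < k → k ≤ j → B k = [] := by
    intro k h1 h2
    exact not_ne_iff.mp (Nat.findGreatest_is_greatest h1 h2)
  -- least nonempty block index > j
  have hex : ∃ k, j < k ∧ B k ≠ [] :=
    ⟨j₂, hj₂, by rw [hB _ hj₂']; exact hne₂⟩
  set j'' := Nat.find hex with hj''def
  have hQ := Nat.find_spec hex
  rw [← hj''def] at hQ
  have hj''len : j'' < lf.length := by
    by_contra h0
    exact hQ.2 (dif_neg h0)
  have hj''min : ∀ k, j < k → k < j'' → B k = [] := by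
    intro k h1 h2
    by_contra hc
    exact Nat.find_min hex h2 ⟨h1, hc⟩
  have hjj'' : j < j'' := hQ.1
  -- images along the stretch
  have himgk : ∀ k (_ : j' ≤ k) (_ : k < j''), g.fv (H.t (lf[k]'(by omega))) = some w := by
    intro k h1 h2
    rcases le_or_gt k j with hk | hk
    · have := tel_blocks hg hL hpath hk (by omega)
        (fun k' h1' h2' => by
          rw [← hB k' (by omega)]
          exact hj'max k' (by omega) h2')
      rw [this]; exact hw
    · have := tel_blocks hg hL hpath (le_of_lt hk) (by omega)
        (fun k' h1' h2' => by
          rw [← hB k' (by omega)]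
          exact hj''min k' h1' (by omega))
      rw [← this]; exact hw
  have hsome : ∀ k (_ : j' ≤ k) (_ : k < j''),
      ∃ u : H.V, H.t (lf[k]'(by omega)) = some u ∧ H.Bivalent u ∧
        g.fv (some u) = some w := by
    intro k h1 h2
    have hik := himgk k h1 h2
    cases hu : H.t (lf[k]'(by omega)) with
    | none => rw [hu, hg.1] at hik; exact absurd hik (by simp)
    | some u =>
      rw [hu] at hik
      refine ⟨u, rfl, ?_, hik⟩
      have hb := hmid k (by omega)
      rw [List.get_eq_getElem, hu] at hb
      rcases hb with h0 | ⟨v, hv, hbv⟩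
      · exact absurd h0 (by simp)
      · exact (Option.some_injective _ hv).symm ▸ hbv
  have harcsk : ∀ k (_ : j' ≤ k) (_ : k < j'') (u : H.V)
      (_ : H.t (lf[k]'(by omega)) = some u),
      ∀ c : H.A, H.t c = some u →
        c = lf[k]'(by omega) ∨ c = H.dag (lf[k + 1]'(by omega)) := by
    intro k h1 h2 u hu c hc
    obtain ⟨u', hu', hbiv, _⟩ := hsome k h1 h2
    have huu : u' = u := Option.some_injective _ (hu'.symm.trans hu)
    subst huu
    have ht2 : H.t (H.dag (lf[k + 1]'(by omega))) = some u' := by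
      rw [← isPath_consec hpath (by omega : k + 1 < lf.length)]
      exact hu
    have hne0 : (lf[k]'(by omega)) ≠ H.dag (lf[k + 1]'(by omega)) := by
      intro h0
      have e1 : f.fa (lf[k]'(by omega)) = a := fiber_fa hlf (List.getElem_mem _)
      have e2 : f.fa (H.dag (lf[k + 1]'(by omega))) = G.dag a := by
        rw [hf.2.1, fiber_fa hlf (List.getElem_mem _)]
      rw [h0, e2] at e1
      exact G.dag_ne a e1
    exact two_arcs hbiv hu ht2 hne0 c hc
  -- walking within the collapsed stretch
  have hwalk : ∀ (p : List H.A) (x : Option H.V) (k : ℕ)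
      (_ : j' ≤ k) (_ : k < j'') (_ : x = H.t (lf[k]'(by omega)))
      (_ : ∀ e ∈ p, e ∉ Set.range g.fa) (z : H.V) (_ : H.IsPath p x (some z)),
      ∃ k', ∃ _ : j' ≤ k', ∃ _ : k' < j'', H.t (lf[k']'(by omega)) = some z := by
    intro p
    induction p with
    | nil =>
      intro x k h1 h2 hx _ z hpz
      exact ⟨k, h1, h2, by rw [← hx]; exact isPath_nil.mp hpz⟩
    | cons e p ih =>
      intro x k h1 h2 hx harc z hpz
      obtain ⟨hde, hrest⟩ := hpz
      obtain ⟨u, hu, _, _⟩ := hsome k h1 h2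
      have hde' : H.t (H.dag e) = some u := by rw [hde, hx, hu]
      have harc' : ∀ e' ∈ p, e' ∉ Set.range g.fa :=
        fun e' he' => harc e' (List.mem_cons_of_mem _ he')
      have henr : e ∉ Set.range g.fa := harc e (List.mem_cons_self (a := e) (l := p))
      rcases harcsk k h1 h2 u hu (H.dag e) hde' with h0 | h0
      · -- dag e = lf[k] : move backward
        have hknr : (lf[k]'(by omega)) ∉ Set.range g.fa := h0 ▸ dag_not_range hg henr
        have hBk : B k = [] := by
          rw [hB k (by omega)]
          exact (fiber_empty_iff (hL _)).2 hknr
        cases k with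
        | zero =>
          exfalso
          have : j' = 0 := by omega
          rw [this] at hj'P
          exact hj'P hBk
        | succ k₀ =>
          have hj'k₀ : j' ≤ k₀ := by
            rcases Nat.lt_or_ge j' (k₀ + 1) with h | h
            · omega
            · exfalso
              have : j' = k₀ + 1 := by omega
              rw [this] at hj'P
              exact hj'P hBk
          have hte : H.t e = H.t (lf[k₀]'(by omega)) := by
            have he' : e = H.dag (lf[k₀ + 1]'(by omega)) := by
              rw [← h0, H.dag_dag]
            rw [he']
            exact (isPath_consec hpath (by omega : k₀ + 1 < lf.length)).symm
          exact ih (H.t e) k₀ hj'k₀ (by omega) hte harc' z hrest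
      · -- e = lf[k+1] : move forward
        have he' : e = lf[k + 1]'(by omega) := by
          have := congrArg H.dag h0
          rwa [H.dag_dag, H.dag_dag] at this
        have hBk : B (k + 1) = [] := by
          rw [hB (k + 1) (by omega)]
          exact (fiber_empty_iff (hL _)).2 (he' ▸ henr)
        have hlt : k + 1 < j'' := by
          rcases Nat.lt_or_ge (k + 1) j'' with h | h
          · exact h
          · exfalso
            have : k + 1 = j'' := by omega
            rw [this] at hBk
            exact hQ.2 hBk
        exact ih (H.t e) (k + 1) (by omega) hlt (by rw [he']) harc' z hrest
  -- the two arcs of K at w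
  obtain ⟨jp, hjp⟩ : ∃ jp, j'' = jp + 1 := ⟨j'' - 1, by omega⟩
  have hj'lt : j' < lf.length := by omega
  have hm₁ne : L (lf[j']'hj'lt) ≠ [] := by rw [← hB _ hj'lt]; exact hj'P
  set c₁ := (L (lf[j']'hj'lt)).getLast hm₁ne with hc₁def
  have hfac₁ : g.fa c₁ = lf[j']'hj'lt := fiber_fa (hL _) (List.getLast_mem _)
  have htc₁ : K.t c₁ = some w := by
    rw [hc₁def, isPath_getLast (hL (lf[j']'hj'lt)).2.2.1 hm₁ne]
    exact himgk j' le_rfl (by omega)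
  have hjp1lt : jp + 1 < lf.length := by omega
  set b₂ := H.dag (lf[jp + 1]'hjp1lt) with hb₂def
  have hLjpne : L (lf[jp + 1]'hjp1lt) ≠ [] := by
    rw [← hB _ hjp1lt]
    have := hQ.2
    rwa [hjp] at this
  have hLb₂ne : L b₂ ≠ [] := by
    obtain ⟨c₀, hc₀⟩ := List.exists_mem_of_ne_nil _ hLjpne
    intro h0
    have hdm : K.dag c₀ ∈ L b₂ := dag_mem_fiber hg (hL _) (hL _) hc₀
    rw [h0] at hdm
    exact absurd hdm List.not_mem_nil
  set c₂ := (L b₂).getLast hLb₂ne with hc₂def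
  have hfac₂ : g.fa c₂ = b₂ := fiber_fa (hL _) (List.getLast_mem _)
  have htc₂ : K.t c₂ = some w := by
    rw [hc₂def, isPath_getLast (hL b₂).2.2.1 hLb₂ne]
    have e2 : H.t (lf[jp]'(by omega)) = H.t (H.dag (lf[jp + 1]'hjp1lt)) :=
      isPath_consec hpath (by omega)
    rw [hb₂def, ← e2]
    exact himgk jp (by omega) (by omega)
  have hnecc : c₁ ≠ c₂ := by
    intro h0
    have hee : g.fa c₁ = g.fa c₂ := by rw [h0]
    rw [hfac₁, hfac₂, hb₂def] at hee
    have e1 : f.fa (lf[j']'hj'lt) = a := fiber_fa hlf (List.getElem_mem _)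
    have e2 : f.fa (H.dag (lf[jp + 1]'hjp1lt)) = G.dag a := by
      rw [hf.2.1, fiber_fa hlf (List.getElem_mem _)]
    rw [hee, e2] at e1
    exact G.dag_ne a e1
  -- no arc at w sits in the middle of its fiber
  have hnomid : ∀ (b : H.A) (p q : List K.A) (c : K.A),
      L b = p ++ c :: q → K.t c = some w → q = [] := by
    intro b p q c hsp htc
    cases q with
    | nil => rfl
    | cons d q' =>
      exfalso
      obtain ⟨u₀, _, _, hgu₀⟩ := hsome j hj'le (by omega)
      have hilen : p.length + 1 < (L b).length := by
        rw [hsp]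
        simp only [List.length_append, List.length_cons]
        omega
      have hget : (L b)[p.length]'(by omega) = c := by
        simp only [hsp]
        rw [List.getElem_append_right le_rfl]
        simp
      exact not_mid_image hH hg (hL b) hilen (by rw [hget]; exact htc) hgu₀
  have hchar : ∀ c : K.A, K.t c = some w → c = c₁ ∨ c = c₂ := by
    intro c hc
    set b := g.fa c with hbdef
    have hcm : c ∈ L b := (hL b).1 c |>.2 rfl
    obtain ⟨p, q, hpq⟩ := List.append_of_mem hcm
    have hq0 : q = [] := hnomid b p q c hpq hc
    subst hq0
    have hLbne : L b ≠ [] := by rw [hpq]; simp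
    have hlastc : (L b).getLast hLbne = c := getLast_of_eq hpq hLbne
    have hendb : g.fv (H.t b) = some w := by
      rw [← isPath_getLast (hL b).2.2.1 hLbne, hlastc]
      exact hc
    cases hub : H.t b with
    | none => rw [hub, hg.1] at hendb; exact absurd hendb (by simp)
    | some u'' =>
      rw [hub] at hendb
      obtain ⟨u, hu, _, hgu⟩ := hsome j hj'le (by omega)
      obtain ⟨pH, hpem, hpp⟩ := hg.2.2.2.1 u u'' (by rw [hgu, hendb]) (by rw [hgu]; simp)
      obtain ⟨k', hk1, hk2, hk3⟩ := hwalk pH (some u) j hj'le (by omega) hu.symm hpem u'' hpp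
      rcases harcsk k' hk1 hk2 u'' hk3 b (by rw [hub]) with hbk | hbk
      · -- b = lf[k'], so k' = j' and c = c₁
        have hk'j' : k' = j' := by
          by_contra hne0
          have h1 : j' < k' := lt_of_le_of_ne hk1 (Ne.symm hne0)
          have hBk' : B k' = [] := by
            rcases le_or_gt k' j with h | h
            · exact hj'max k' h1 h
            · exact hj''min k' h hk2
          rw [hB _ (by omega)] at hBk'
          rw [hbk, hBk'] at hcm
          exact absurd hcm List.not_mem_nil
        subst hk'j'
        left
        rw [hc₁def, ← hlastc]
        congr 1
        rw [hbk]
      · -- b = dag lf[k'+1], so k'+1 = j'' and c = c₂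
        have hk'1 : k' + 1 = j'' := by
          by_contra hne0
          have h1 : k' + 1 < j'' := by omega
          have hBk : B (k' + 1) = [] := by
            rcases le_or_gt (k' + 1) j with h | h
            · exact hj'max (k' + 1) (by omega) h
            · exact hj''min (k' + 1) h h1
          rw [hB _ (by omega)] at hBk
          have hdagb : H.dag b = lf[k' + 1]'(by omega) := by rw [hbk, H.dag_dag]
          have hdm := dag_mem_fiber hg (hL b) (hL (H.dag b)) hcm
          rw [hdagb, hBk] at hdm
          exact absurd hdm List.not_mem_nil
        obtain rfl : k' = jp := by omega
        right
        rw [hc₂def, ← hlastc]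
        congr 1
        rw [hbk, hb₂def]
  refine ⟨bivalent_of_two htc₁ htc₂ hnecc hchar, ?_⟩
  intro c hc
  rcases hchar c hc with rfl | rfl
  · left
    rw [hfac₁]
    exact fiber_fa hlf (List.getElem_mem _)
  · right
    rw [hfac₂, hb₂def, hf.2.1, fiber_fa hlf (List.getElem_mem _)]

end CGraph

namespace CGraph

variable {G H K : CGraph}

theorem flatMap_nodup {g : PreMap H K} {L : H.A → List K.A}
    (hL : ∀ b, FiberList g b (L b)) :
    ∀ (l : List H.A), l.Nodup → (l.flatMap L).Nodup := by
  intro l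
  induction l with
  | nil => intro _; simp
  | cons b r ih =>
    intro hnd
    rw [List.nodup_cons] at hnd
    rw [List.flatMap_cons]
    refine List.Nodup.append (hL b).2.1 (ih hnd.2) ?_
    intro c hc hc'
    rw [List.mem_flatMap] at hc'
    obtain ⟨b', hb', hcb'⟩ := hc'
    have e1 : g.fa c = b := fiber_fa (hL b) hc
    have e2 : g.fa c = b' := fiber_fa (hL b') hcb'
    rw [e1] at e2
    exact hnd.1 (e2 ▸ hb')

theorem flatMap_isPath {g : PreMap H K} (hg : IsGraphMap g) {L : H.A → List K.A}
    (hL : ∀ b, FiberList g b (L b)) :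
    ∀ (l : List H.A) (s e : Option H.V), H.IsPath l s e →
      K.IsPath (l.flatMap L) (g.fv s) (g.fv e) := by
  intro l
  induction l with
  | nil => intro s e h; exact congrArg g.fv (isPath_nil.mp h)
  | cons b r ih =>
    intro s e h
    rw [List.flatMap_cons]
    refine isPath_append ?_ (ih _ _ h.2)
    have := (hL b).2.2.1
    rwa [h.1] at this

theorem fiberList_comp (hH : H.Connected)
    {f : PreMap G H} {g : PreMap H K} (hf : IsGraphMap f) (hg : IsGraphMap g)
    {L : H.A → List K.A} (hL : ∀ b, FiberList g b (L b))
    {a : G.A} {lf : List H.A} (hlf : FiberList f a lf) :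
    FiberList (f.comp g) a (lf.flatMap L) := by
  have hndlf := hlf.2.1
  refine ⟨?_, flatMap_nodup hL lf hndlf, ?_, ?_⟩
  · intro c
    rw [List.mem_flatMap]
    constructor
    · rintro ⟨b, hb, hc⟩
      have e1 : g.fa c = b := fiber_fa (hL b) hc
      have e2 : f.fa b = a := fiber_fa hlf hb
      show f.fa (g.fa c) = a
      rw [e1, e2]
    · intro h
      exact ⟨g.fa c, (hlf.1 _).2 h, ((hL (g.fa c)).1 c).2 rfl⟩
  · exact flatMap_isPath hg hL lf _ _ hlf.2.2.1
  · -- bivalence of intermediate vertices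
    have hKey : ∀ l₁ (c : K.A) l₂, lf.flatMap L = l₁ ++ c :: l₂ → l₂ ≠ [] →
        K.BivAt (K.t c) := by
      intro l₁ c l₂ hsplit hl₂
      have hcmem : c ∈ lf.flatMap L := by rw [hsplit]; simp
      rw [List.mem_flatMap] at hcmem
      obtain ⟨b, hb, hcb⟩ := hcmem
      obtain ⟨p, q, hpq⟩ := List.append_of_mem hcb
      cases q with
      | cons d q' =>
        -- c is a mid vertex of the fiber of b
        have hilen : p.length + 1 < (L b).length := by
          rw [hpq]
          simp only [List.length_append, List.length_cons]
          omega
        have hbiv := (hL b).2.2.2 p.length hilen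
        rw [List.get_eq_getElem] at hbiv
        have hget : (L b)[p.length]'(by omega) = c := by
          simp only [hpq]
          rw [List.getElem_append_right le_rfl]
          simp
        rwa [hget] at hbiv
      | nil =>
        -- c is the last arc of the fiber of b; junction vertex
        obtain ⟨xs, ys, hxs⟩ := List.append_of_mem hb
        have hLbne : L b ≠ [] := by rw [hpq]; simp
        have hendb : K.t c = g.fv (H.t b) := by
          rw [← isPath_getLast (hL b).2.2.1 hLbne, getLast_of_eq hpq hLbne]
        -- find a nonempty block after
        have hrej : lf.flatMap L = (xs.flatMap L ++ p) ++ c :: ys.flatMap L := by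
          rw [hxs, List.flatMap_append, List.flatMap_cons, hpq]
          simp [List.append_assoc]
        have hndJ : (l₁ ++ c :: l₂).Nodup := by
          rw [← hsplit]; exact flatMap_nodup hL lf hndlf
        have hcl₁ : c ∉ l₁ := by
          rw [List.nodup_append] at hndJ
          exact fun hc0 => hndJ.2.2 c hc0 c List.mem_cons_self rfl
        have hcl₁' : c ∉ xs.flatMap L ++ p := by
          intro hc0
          rcases List.mem_append.mp hc0 with h0 | h0
          · rw [List.mem_flatMap] at h0
            obtain ⟨b', hb', hcb'⟩ := h0
            have e1 : g.fa c = b := fiber_fa (hL b) hcb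
            have e2 : g.fa c = b' := fiber_fa (hL b') hcb'
            have : b ∈ xs := by rw [e1] at e2; exact e2 ▸ hb'
            have hndlf' := hndlf
            rw [hxs, List.nodup_append] at hndlf'
            exact hndlf'.2.2 b this b List.mem_cons_self rfl
          · have := (hL b).2.1
            rw [hpq, List.nodup_append] at this
            exact this.2.2 c h0 c List.mem_cons_self rfl
        obtain ⟨-, hl₂eq⟩ := append_cons_inj l₁ _ (hsplit.symm.trans hrej) hcl₁ hcl₁'
        have hysne : ys.flatMap L ≠ [] := by rw [← hl₂eq]; exact hl₂
        have hex2 : ∃ b'' ∈ ys, L b'' ≠ [] := by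
          by_contra h0
          push_neg at h0
          exact hysne (List.flatMap_eq_nil_iff.mpr h0)
        obtain ⟨b'', hb''ys, hLb''⟩ := hex2
        obtain ⟨nys, hnys, hgetys⟩ := List.mem_iff_getElem.mp hb''ys
        -- set up indices for junction_two
        have hlen_lf : lf.length = xs.length + 1 + ys.length := by
          rw [hxs]
          simp only [List.length_append, List.length_cons]
          omega
        have hjlen : xs.length + 1 < lf.length := by omega
        have hgetj : lf[xs.length]'(by omega) = b := by
          simp only [hxs]
          rw [List.getElem_append_right le_rfl]
          simp
        have hj₂lt : xs.length + 1 + nys < lf.length := by omega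
        have hgetj₂ : lf[xs.length + 1 + nys]'hj₂lt = b'' := by
          simp only [hxs]
          rw [List.getElem_append_right (by omega)]
          have h2 : xs.length + 1 + nys - xs.length = nys + 1 := by omega
          simp only [h2]
          rw [List.getElem_cons_succ]
          exact hgetys
        cases hv : g.fv (H.t b) with
        | none => rw [hendb, hv]; exact Or.inl rfl
        | some w =>
          have hwj : g.fv (H.t (lf[xs.length]'(by omega))) = some w := by
            rw [hgetj]; exact hv
          have hne₁' : L (lf[xs.length]'(by omega)) ≠ [] := by
            rw [hgetj]; exact hLbne
          have hne₂' : L (lf[xs.length + 1 + nys]'hj₂lt) ≠ [] := by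
            rw [hgetj₂]; exact hLb''
          obtain ⟨hbw, -⟩ := junction_two hH hf hg hL hlf hjlen hwj le_rfl hne₁'
            (by omega) hj₂lt hne₂'
          rw [hendb, hv]
          exact Or.inr ⟨w, rfl, hbw⟩
    intro i hi
    rw [List.get_eq_getElem]
    have hlt : i < (lf.flatMap L).length := by omega
    refine hKey ((lf.flatMap L).take i) _ ((lf.flatMap L).drop (i + 1)) ?_ ?_
    · conv_lhs => rw [← List.take_append_drop i (lf.flatMap L)]
      rw [List.drop_eq_getElem_cons hlt]
    · rw [ne_eq, List.drop_eq_nil_iff]; omega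

end CGraph

namespace CGraph

variable {G H K : CGraph}

theorem comp_four (hG : G.Connected) {f : PreMap G H} {g : PreMap H K}
    (hf : IsGraphMap f) (hg : IsGraphMap g) :
    ∀ v v' : G.V, (f.comp g).fv (some v) = (f.comp g).fv (some v') →
      (f.comp g).fv (some v) ≠ none →
      ∃ l, (∀ c ∈ l, c ∉ Set.range (f.comp g).fa) ∧
        G.IsPath l (some v) (some v') := by
  classical
  intro v v' heq hnn
  choose Lf hLf using hf.2.2.1
  have hrange : ∀ aG : G.A, aG ∉ Set.range f.fa → aG ∉ Set.range (f.comp g).fa := by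
    rintro aG h ⟨c, hc⟩
    exact h ⟨g.fa c, hc⟩
  have hcoll : ∀ aG : G.A, (∀ bH ∈ Lf aG, bH ∉ Set.range g.fa) →
      aG ∉ Set.range (f.comp g).fa := by
    rintro aG hall ⟨c, hc⟩
    have : g.fa c ∈ Lf aG := ((hLf aG).1 _).2 hc
    exact hall _ this ⟨c, rfl⟩
  have hglue : ∀ (y y' : G.V), f.fv (some y) = f.fv (some y') →
      f.fv (some y) ≠ none →
      ∀ l, (∀ c ∈ l, c ∉ Set.range (f.comp g).fa) → G.IsPath l (some v) (some y) →
      ∃ l', (∀ c ∈ l', c ∉ Set.range (f.comp g).fa) ∧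
        G.IsPath l' (some v) (some y') := by
    intro y y' he hn l hl hp
    obtain ⟨l₂, hl₂, hp₂⟩ := hf.2.2.2.1 y y' he hn
    refine ⟨l ++ l₂, ?_, isPath_append hp hp₂⟩
    intro c hc
    rcases List.mem_append.mp hc with h | h
    · exact hl c h
    · exact hrange _ (hl₂ c h)
  obtain ⟨u, hu⟩ : ∃ u, f.fv (some v) = some u := by
    cases h0 : f.fv (some v) with
    | none =>
      refine absurd ?_ hnn
      show g.fv (f.fv (some v)) = none
      rw [h0, hg.1]
    | some u => exact ⟨u, rfl⟩
  obtain ⟨u', hu'⟩ : ∃ u', f.fv (some v') = some u' := by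
    cases h0 : f.fv (some v') with
    | none =>
      refine absurd ?_ hnn
      rw [heq]
      show g.fv (f.fv (some v')) = none
      rw [h0, hg.1]
    | some u' => exact ⟨u', rfl⟩
  obtain ⟨w, hw⟩ : ∃ w, g.fv (some u) = some w := by
    cases h0 : g.fv (some u) with
    | none =>
      refine absurd ?_ hnn
      show g.fv (f.fv (some v)) = none
      rw [hu, h0]
    | some w => exact ⟨w, rfl⟩
  have hw' : g.fv (some u') = some w := by
    have h1 : (f.comp g).fv (some v') = some w := by
      rw [← heq]
      show g.fv (f.fv (some v)) = some w
      rw [hu, hw]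
    have h2 : (f.comp g).fv (some v') = g.fv (f.fv (some v')) := rfl
    rw [h2, hu'] at h1
    exact h1
  obtain ⟨pH, hpem, hpp⟩ := hg.2.2.2.1 u u' (by rw [hw, hw']) (by rw [hw]; simp)
  have walk : ∀ (p : List H.A) (x : Option H.V)
      (_ : ∀ e ∈ p, e ∉ Set.range g.fa) (_ : g.fv x = some w)
      (_ : H.IsPath p x (some u'))
      (_ : (∃ y : G.V, f.fv (some y) = x ∧
              ∃ l, (∀ c ∈ l, c ∉ Set.range (f.comp g).fa) ∧
                G.IsPath l (some v) (some y)) ∨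
           (∃ (aG : G.A) (k : ℕ) (_ : k + 1 < (Lf aG).length) (v₀ : G.V),
              x = H.t ((Lf aG)[k]'(by omega)) ∧
              (∀ i (_ : i ≤ k), (Lf aG)[i]'(by omega) ∉ Set.range g.fa) ∧
              G.t (G.dag aG) = some v₀ ∧
              ∃ l, (∀ c ∈ l, c ∉ Set.range (f.comp g).fa) ∧
                G.IsPath l (some v) (some v₀))),
      ∃ l, (∀ c ∈ l, c ∉ Set.range (f.comp g).fa) ∧
        G.IsPath l (some v) (some v') := by
    intro p
    induction p with
    | nil =>
      rintro x _ hgx hpz (⟨y, hyx, l, hl, hp⟩ | ⟨aG, k, hk, v₀, hx, hemp, hv₀, l, hl, hp⟩)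
      · have hxu' : x = some u' := isPath_nil.mp hpz
        exact hglue y v' (by rw [hyx, hxu', hu']) (by rw [hyx, hxu']; simp) l hl hp
      · exfalso
        have hxu' : x = some u' := isPath_nil.mp hpz
        exact not_mid_image hG hf (hLf aG) hk (by rw [← hx, hxu']) hu'
    | cons e p ih =>
      rintro x harc hgx hpz hst
      obtain ⟨hde, hrest⟩ := hpz
      have henr : e ∉ Set.range g.fa := harc e (List.mem_cons_self (a := e) (l := p))
      have harc' : ∀ e' ∈ p, e' ∉ Set.range g.fa :=
        fun e' h => harc e' (List.mem_cons_of_mem _ h)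
      have hegx : g.fv (H.t e) = some w := by
        rw [← not_range_fv_eq hg henr, hde, hgx]
      refine ih (H.t e) harc' hegx hrest ?_
      obtain ⟨x₀, hx₀⟩ : ∃ x₀, x = some x₀ := by
        cases hxx : x with
        | none => rw [hxx, hg.1] at hgx; exact absurd hgx (by simp)
        | some x₀ => exact ⟨x₀, rfl⟩
      rcases hst with ⟨y, hyx, l, hl, hp⟩ | ⟨aG, k, hk, v₀, hx, hemp, hv₀, l, hl, hp⟩
      · -- state (A): at an image vertex
        set aG := f.fa e with haGdef
        have heLf : e ∈ Lf aG := ((hLf aG).1 e).2 rfl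
        obtain ⟨p₀, q₀, hsp⟩ := List.append_of_mem heLf
        cases p₀ with
        | cons d p₀' =>
          exfalso
          have hilen : p₀'.length + 1 < (Lf aG).length := by
            rw [hsp]; simp only [List.length_append, List.length_cons]; omega
          have hgete : (Lf aG)[p₀'.length + 1]'hilen = e := by
            simp only [hsp]
            have : p₀'.length + 1 = (d :: p₀').length := by simp
            rw [List.getElem_append_right (by simp)]
            simp
          have hmidx : H.t ((Lf aG)[p₀'.length]'(by omega)) = some x₀ := by
            rw [isPath_consec (hLf aG).2.2.1 hilen, hgete, hde, hx₀]
          exact not_mid_image hG hf (hLf aG) hilen hmidx (by rw [hyx, hx₀])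
        | nil =>
          have hsp0 : Lf aG = e :: q₀ := by simpa using hsp
          have hstart : H.t (H.dag e) = f.fv (G.t (G.dag aG)) := by
            have h1 := (hLf aG).2.2.1
            rw [hsp0] at h1
            exact h1.1
          have hfvda : f.fv (G.t (G.dag aG)) = some x₀ := by rw [← hstart, hde, hx₀]
          obtain ⟨v₀, hv₀⟩ : ∃ v₀, G.t (G.dag aG) = some v₀ := by
            cases hgt : G.t (G.dag aG) with
            | none => rw [hgt, hf.1] at hfvda; exact absurd hfvda (by simp)
            | some v₀ => exact ⟨v₀, rfl⟩
          obtain ⟨l0, hl0, hp0⟩ := hglue y v₀ (by rw [hyx, hx₀, ← hfvda, hv₀])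
            (by rw [hyx, hx₀]; simp) l hl hp
          cases q₀ with
          | nil =>
            left
            have hend : H.t e = f.fv (G.t aG) := by
              have h1 := (hLf aG).2.2.1
              rw [hsp0] at h1
              exact isPath_nil.mp h1.2
            obtain ⟨x₁, hx₁⟩ : ∃ x₁, H.t e = some x₁ := by
              cases hte : H.t e with
              | none => rw [hte, hg.1] at hegx; exact absurd hegx (by simp)
              | some x₁ => exact ⟨x₁, rfl⟩
            obtain ⟨v₁, hv₁⟩ : ∃ v₁, G.t aG = some v₁ := by
              cases hgt : G.t aG with
              | none =>
                rw [hgt, hf.1] at hend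
                rw [hend] at hx₁
                exact absurd hx₁ (by simp)
              | some v₁ => exact ⟨v₁, rfl⟩
            have hanr : aG ∉ Set.range (f.comp g).fa := by
              apply hcoll
              intro bH hbH
              rw [hsp0, List.mem_singleton] at hbH
              exact hbH ▸ henr
            refine ⟨v₁, by rw [hend, hv₁], l0 ++ [aG], ?_, ?_⟩
            · intro c hc
              rcases List.mem_append.mp hc with h0 | h0
              · exact hl0 c h0
              · rw [List.mem_singleton] at h0; exact h0 ▸ hanr
            · exact isPath_append hp0 ⟨hv₀, show G.t aG = some v₁ from hv₁⟩
          | cons e₂ q₀' =>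
            right
            refine ⟨aG, 0, by rw [hsp0]; simp, v₀, ?_, ?_, hv₀, l0, hl0, hp0⟩
            · have h1 : (Lf aG)[0]'(by rw [hsp0]; simp) = e := by simp [hsp0]
              rw [h1]
            · intro i hi
              have : i = 0 := by omega
              subst this
              have h1 : (Lf aG)[0]'(by rw [hsp0]; simp) = e := by simp [hsp0]
              rw [h1]
              exact henr
      · -- state (C): inside a fiber
        obtain ⟨u₀, hu₀⟩ : ∃ u₀, H.t ((Lf aG)[k]'(by omega)) = some u₀ :=
          ⟨x₀, by rw [← hx, hx₀]⟩
        have hbiv : H.Bivalent u₀ := by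
          have h1 := (hLf aG).2.2.2 k hk
          rw [List.get_eq_getElem, hu₀] at h1
          rcases h1 with h0 | ⟨vv, hvv, hbv⟩
          · exact absurd h0 (by simp)
          · exact (Option.some_injective _ hvv).symm ▸ hbv
        have ht2 : H.t (H.dag ((Lf aG)[k + 1]'hk)) = some u₀ := by
          rw [← isPath_consec (hLf aG).2.2.1 hk]; exact hu₀
        have hne0 : ((Lf aG)[k]'(by omega)) ≠ H.dag ((Lf aG)[k + 1]'hk) := by
          intro h0
          have e1 : f.fa ((Lf aG)[k]'(by omega)) = aG :=
            fiber_fa (hLf aG) (List.getElem_mem _)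
          have e2 : f.fa (H.dag ((Lf aG)[k + 1]'hk)) = G.dag aG := by
            rw [hf.2.1, fiber_fa (hLf aG) (List.getElem_mem _)]
          rw [h0, e2] at e1
          exact G.dag_ne aG e1
        have hdex : H.t (H.dag e) = some u₀ := by rw [hde, hx]; exact hu₀
        rcases two_arcs hbiv hu₀ ht2 hne0 (H.dag e) hdex with h0 | h0
        · -- backward step
          cases k with
          | zero =>
            left
            have hte : H.t e = f.fv (G.t (G.dag aG)) := by
              have he' : e = H.dag ((Lf aG)[0]'(by omega)) := by
                rw [← h0, H.dag_dag]
              rw [he']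
              exact isPath_head (hLf aG).2.2.1 (by omega)
            exact ⟨v₀, by rw [hte, hv₀], l, hl, hp⟩
          | succ k₀ =>
            right
            have hte : H.t e = H.t ((Lf aG)[k₀]'(by omega)) := by
              have he' : e = H.dag ((Lf aG)[k₀ + 1]'(by omega)) := by
                rw [← h0, H.dag_dag]
              rw [he']
              exact (isPath_consec (hLf aG).2.2.1 (by omega)).symm
            exact ⟨aG, k₀, by omega, v₀, hte, fun i hi => hemp i (by omega), hv₀,
              l, hl, hp⟩
        · -- forward step
          have he' : e = (Lf aG)[k + 1]'hk := by
            have h1 := congrArg H.dag h0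
            rwa [H.dag_dag, H.dag_dag] at h1
          rcases Nat.lt_or_ge (k + 2) (Lf aG).length with hlt | hge
          · right
            refine ⟨aG, k + 1, hlt, v₀, by rw [he'], ?_, hv₀, l, hl, hp⟩
            intro i hi
            rcases Nat.lt_or_ge i (k + 1) with h2 | h2
            · exact hemp i (by omega)
            · have : i = k + 1 := by omega
              subst this
              exact he' ▸ henr
          · -- exit at the end of the fiber
            left
            have hLfne : Lf aG ≠ [] := by
              intro h0'
              rw [h0'] at hk
              simp at hk
            have hend : H.t e = f.fv (G.t aG) := by
              rw [he']
              have h1 := isPath_getLast (hLf aG).2.2.1 hLfne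
              rw [List.getLast_eq_getElem] at h1
              have hidx : k + 1 = (Lf aG).length - 1 := by omega
              simp only [hidx]
              exact h1
            obtain ⟨x₁, hx₁⟩ : ∃ x₁, H.t e = some x₁ := by
              cases hte : H.t e with
              | none => rw [hte, hg.1] at hegx; exact absurd hegx (by simp)
              | some x₁ => exact ⟨x₁, rfl⟩
            obtain ⟨v₁, hv₁⟩ : ∃ v₁, G.t aG = some v₁ := by
              cases hgt : G.t aG with
              | none =>
                rw [hgt, hf.1] at hend
                rw [hend] at hx₁
                exact absurd hx₁ (by simp)
              | some v₁ => exact ⟨v₁, rfl⟩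
            have hanr : aG ∉ Set.range (f.comp g).fa := by
              apply hcoll
              intro bH hbH
              obtain ⟨ib, hib, hibe⟩ := List.mem_iff_getElem.mp hbH
              rcases Nat.lt_or_ge ib (k + 1) with h2 | h2
              · exact hibe ▸ hemp ib (by omega)
              · have : ib = k + 1 := by omega
                subst this
                rw [← hibe]
                exact he' ▸ henr
            refine ⟨v₁, by rw [hend, hv₁], l ++ [aG], ?_,
              isPath_append hp ⟨hv₀, show G.t aG = some v₁ from hv₁⟩⟩
            intro c hc
            rcases List.mem_append.mp hc with h2 | h2
            · exact hl c h2
            · rw [List.mem_singleton] at h2; exact h2 ▸ hanr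
  exact walk pH (some u) hpem hw hpp (Or.inl ⟨v, hu, ⟨[], by simp, rfl⟩⟩)

end CGraph

namespace CGraph

variable {G H K : CGraph}

theorem comp_five (hG : G.Connected) (hH : H.Connected)
    {f : PreMap G H} {g : PreMap H K} (hf : IsGraphMap f) (hg : IsGraphMap g) :
    ∀ w : K.V, (∀ vG : G.V, (f.comp g).fv (some vG) ≠ some w) →
      K.Bivalent w ∧ ∃ a : G.A, OnFiberPath (f.comp g) w a ∧
        ∀ a' : G.A, OnFiberPath (f.comp g) w a' → a' = a ∨ a' = G.dag a := by
  classical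
  intro w hwall
  choose L hL using hg.2.2.1
  by_cases hcase : ∀ vH : H.V, g.fv (some vH) ≠ some w
  · obtain ⟨hbw, b₀, ⟨l₀, hl₀, hmid₀⟩, huniq⟩ := hg.2.2.2.2 w hcase
    refine ⟨hbw, f.fa b₀, ?_, ?_⟩
    · set L' : H.A → List K.A := fun b => if b = b₀ then l₀ else L b with hL'def
      have hL' : ∀ b, FiberList g b (L' b) := by
        intro b
        by_cases h : b = b₀
        · subst h; simp only [hL'def, if_pos rfl]; exact hl₀
        · simp only [hL'def, if_neg h]; exact hL b
      obtain ⟨lf, hlf⟩ := hf.2.2.1 (f.fa b₀)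
      refine ⟨lf.flatMap L', fiberList_comp hH hf hg hL' hlf, ?_⟩
      have hb₀lf : b₀ ∈ lf := (hlf.1 b₀).2 rfl
      obtain ⟨xs, ys, hxs⟩ := List.append_of_mem hb₀lf
      obtain ⟨p, c, q, hl₀s, hqne, htc⟩ := midVertexOf_iff.mp hmid₀
      rw [midVertexOf_iff]
      refine ⟨xs.flatMap L' ++ p, c, q ++ ys.flatMap L', ?_, by simp [hqne], htc⟩
      rw [hxs, List.flatMap_append, List.flatMap_cons]
      have hLb₀ : L' b₀ = l₀ := by simp [hL'def]
      rw [hLb₀, hl₀s]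
      simp [List.append_assoc]
    · rintro a' ⟨l', hfib', hmid'⟩
      obtain ⟨p', c', q', hsp', hqne', htc'⟩ := midVertexOf_iff.mp hmid'
      have hc'mem : c' ∈ l' := by rw [hsp']; simp
      have hfa' : f.fa (g.fa c') = a' := (hfib'.1 c').1 hc'mem
      set b' := g.fa c' with hb'def
      have hcL : c' ∈ L b' := ((hL b').1 c').2 rfl
      obtain ⟨pp, qq, hppqq⟩ := List.append_of_mem hcL
      cases qq with
      | nil =>
        exfalso
        have hLbne : L b' ≠ [] := by rw [hppqq]; simp
        have hendb : g.fv (H.t b') = some w := by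
          rw [← isPath_getLast (hL b').2.2.1 hLbne, getLast_of_eq hppqq hLbne]
          exact htc'
        cases hub : H.t b' with
        | none => rw [hub, hg.1] at hendb; exact absurd hendb (by simp)
        | some u'' => rw [hub] at hendb; exact hcase u'' hendb
      | cons dd qq' =>
        have honb : OnFiberPath g w b' := by
          refine ⟨L b', hL b', ?_⟩
          rw [midVertexOf_iff]
          exact ⟨pp, c', dd :: qq', hppqq, by simp, htc'⟩
        rcases huniq b' honb with h | h
        · left; rw [← hfa', h]
        · right; rw [← hfa', h, hf.2.1]
  · push_neg at hcase
    obtain ⟨u, hu⟩ := hcase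
    have hufree : ∀ vG : G.V, f.fv (some vG) ≠ some u := by
      intro vG h
      apply hwall vG
      show g.fv (f.fv (some vG)) = some w
      rw [h, hu]
    obtain ⟨hubiv, a₁, ⟨lf, hlf, hmidu⟩, -⟩ := hf.2.2.2.2 u hufree
    obtain ⟨jj, hjj, hju⟩ := hmidu
    rw [List.get_eq_getElem] at hju
    have hpre : ∃ j₁, ∃ _ : j₁ ≤ jj, L (lf[j₁]'(by omega)) ≠ [] := by
      by_contra hno
      push_neg at hno
      have h0 : g.fv (f.fv (G.t (G.dag a₁))) = some w := by
        have hs : H.t (H.dag (lf[0]'(by omega))) = f.fv (G.t (G.dag a₁)) :=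
          isPath_head hlf.2.2.1 (by omega)
        have h1 : g.fv (f.fv (G.t (G.dag a₁))) = g.fv (H.t (lf[0]'(by omega))) := by
          rw [← hs]
          apply not_range_fv_eq hg
          rw [← fiber_empty_iff (hL _)]
          exact hno 0 (by omega)
        have h2 := tel_blocks hg hL hlf.2.2.1 (Nat.zero_le jj) (by omega)
          (fun k _ hk2 => hno k hk2)
        rw [h1, h2, hju, hu]
      cases hgt : G.t (G.dag a₁) with
      | none => rw [hgt, hf.1, hg.1] at h0; exact absurd h0 (by simp)
      | some vv => rw [hgt] at h0; exact hwall vv h0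
    obtain ⟨j₁, hj₁, hne₁⟩ := hpre
    have hpost : ∃ j₂, jj < j₂ ∧ ∃ h : j₂ < lf.length, L (lf[j₂]'h) ≠ [] := by
      by_contra hno
      push_neg at hno
      have h0 : g.fv (f.fv (G.t a₁)) = some w := by
        have hlfne : lf ≠ [] := by intro h0'; rw [h0'] at hjj; simp at hjj
        have he : H.t (lf[lf.length - 1]'(by omega)) = f.fv (G.t a₁) := by
          have h1 := isPath_getLast hlf.2.2.1 hlfne
          rw [List.getLast_eq_getElem] at h1
          exact h1
        have h2 := tel_blocks hg hL hlf.2.2.1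
          (show jj ≤ lf.length - 1 by omega) (by omega)
          (fun k hk1 _ => hno k hk1 (by omega))
        rw [← he, ← h2, hju, hu]
      cases hgt : G.t a₁ with
      | none => rw [hgt, hf.1, hg.1] at h0; exact absurd h0 (by simp)
      | some vv => rw [hgt] at h0; exact hwall vv h0
    obtain ⟨j₂, hj₂gt, hj₂lt, hne₂⟩ := hpost
    obtain ⟨hbw, hchar⟩ := junction_two hH hf hg hL hlf hjj
      (by rw [hju]; exact hu) hj₁ hne₁ hj₂gt hj₂lt hne₂
    refine ⟨hbw, a₁, ?_, ?_⟩
    · refine ⟨lf.flatMap L, fiberList_comp hH hf hg hL hlf, ?_⟩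
      set pre := (lf.take (jj + 1)).flatMap L with hpredef
      set post := (lf.drop (jj + 1)).flatMap L with hpostdef
      have hsplit : lf.flatMap L = pre ++ post := by
        rw [hpredef, hpostdef, ← List.flatMap_append, List.take_append_drop]
      have hprene : pre ≠ [] := by
        intro h0
        rw [hpredef, List.flatMap_eq_nil_iff] at h0
        apply hne₁
        apply h0
        have hg1 : (lf.take (jj + 1))[j₁]'(by rw [List.length_take]; omega) =
            lf[j₁]'(by omega) := List.getElem_take
        rw [← hg1]
        exact List.getElem_mem _
      have hpostne : post ≠ [] := by
        intro h0
        rw [hpostdef, List.flatMap_eq_nil_iff] at h0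
        apply hne₂
        apply h0
        have hg1 : (lf.drop (jj + 1))[j₂ - (jj + 1)]'(by rw [List.length_drop]; omega) =
            lf[j₂]'hj₂lt := by
          rw [List.getElem_drop]
          simp only [show jj + 1 + (j₂ - (jj + 1)) = j₂ from by omega]
        rw [← hg1]
        exact List.getElem_mem _
      have hKfull := (fiberList_comp hH hf hg hL hlf).2.2.1
      rw [hsplit] at hKfull
      obtain ⟨xm, hx1, hx2⟩ := isPath_split hKfull
      have hprepath : K.IsPath pre (g.fv (f.fv (G.t (G.dag a₁)))) (some w) := by
        have h1 : H.IsPath (lf.take (jj + 1)) (f.fv (G.t (G.dag a₁)))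
            (H.t (lf[jj]'(by omega))) := isPath_take hlf.2.2.1 (by omega)
        have h2 := flatMap_isPath hg hL _ _ _ h1
        rw [hju, hu] at h2
        exact h2
      have hxm : xm = some w := isPath_end_unique hx1 hprepath
      have hlast : K.t (pre.getLast hprene) = some w := by
        rw [isPath_getLast hx1 hprene, hxm]
      rw [midVertexOf_iff]
      refine ⟨pre.dropLast, pre.getLast hprene, post, ?_, hpostne, hlast⟩
      rw [hsplit]
      conv_lhs => rw [← List.dropLast_append_getLast hprene]
      rw [List.append_assoc]
      simp
    · rintro a' ⟨l', hfib', hmid'⟩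
      obtain ⟨p', c', q', hsp', hqne', htc'⟩ := midVertexOf_iff.mp hmid'
      have hc'mem : c' ∈ l' := by rw [hsp']; simp
      have hfa' : f.fa (g.fa c') = a' := (hfib'.1 c').1 hc'mem
      rcases hchar c' htc' with h | h
      · left; rw [← hfa']; exact h
      · right; rw [← hfa']; exact h

end CGraph
/-!
STATEMENT 7: If `f : Γ → Λ` and `g : Λ → Ξ` are combinatorial graph maps between
connected graphs, then the pair `(g_v ∘ f_v, f_a ∘ g_a)` is a combinatorial graph map
`Γ → Ξ`.  Together with the identity maps, connected graphs and combinatorial graph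
maps form a category (compositions of graph maps are graph maps, identities are graph
maps, and composition is unital and associative).
-/

open CGraph in
theorem graphMaps_form_category :
    (∀ (G H K : CGraph), G.Connected → H.Connected → K.Connected →
      ∀ (f : PreMap G H) (g : PreMap H K), IsGraphMap f → IsGraphMap g →
        IsGraphMap (f.comp g)) ∧
    (∀ G : CGraph, G.Connected → IsGraphMap (PreMap.id G)) ∧
    (∀ (G H : CGraph) (f : PreMap G H),
      (PreMap.id G).comp f = f ∧ f.comp (PreMap.id H) = f) ∧
    (∀ (G H K L : CGraph) (f : PreMap G H) (g : PreMap H K) (h : PreMap K L),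
      (f.comp g).comp h = f.comp (g.comp h)) := by
  refine ⟨?_, ?_, ?_, ?_⟩
  · -- composition of graph maps is a graph map
    intro G H K hG hH hK f g hf hg
    classical
    refine ⟨?_, ?_, ?_, comp_four hG hf hg, comp_five hG hH hf hg⟩
    · show g.fv (f.fv none) = none
      rw [hf.1, hg.1]
    · intro c
      show f.fa (g.fa (K.dag c)) = G.dag (f.fa (g.fa c))
      rw [hg.2.1, hf.2.1]
    · intro a
      choose L hL using hg.2.2.1
      obtain ⟨lf, hlf⟩ := hf.2.2.1 a
      exact ⟨lf.flatMap L, fiberList_comp hH hf hg hL hlf⟩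
  · -- the identity is a graph map
    intro G hG
    refine ⟨rfl, fun b => rfl, ?_, ?_, ?_⟩
    · intro a
      refine ⟨[a], ?_, by simp, ⟨rfl, rfl⟩, ?_⟩
      · intro b
        show b ∈ [a] ↔ b = a
        simp
      · intro i hi
        simp at hi
    · intro v v' h _
      have : v = v' := by
        have h' : (some v : Option G.V) = some v' := h
        exact Option.some_injective _ h'
      subst this
      exact ⟨[], by simp, rfl⟩
    · intro w hws
      exact absurd rfl (hws w)
  · -- unitality
    intro G H f
    exact ⟨rfl, rfl⟩
  · -- associativity
    intro G H K L f g h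
    rfl
end

section
/- For a combinatorial graph map f : Γ → Λ between connected graphs and any vertex w of Λ lying in the image of f_v, the fiber subgraph f⁻¹(w) is a connected graph. -/
namespace CGraph

/-- The condition for an arc of `Γ` to belong to the fiber of a pre-map `f : Γ → Λ`
over a vertex `w` of `Λ`: the arc (and its `†`-partner) is not in the image of `f_a`,
and both of its endpoints are vertices lying in `f_v⁻¹(w)`. -/
def FiberArc {G H : CGraph} (f : PreMap G H) (w : H.V) (a : G.A) : Prop :=
  a ∉ Set.range f.fa ∧ G.dag a ∉ Set.range f.fa ∧
    (∃ v, G.t a = some v ∧ f.fv (some v) = some w) ∧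
    (∃ v, G.t (G.dag a) = some v ∧ f.fv (some v) = some w)

/-- The fiber `f⁻¹(w)` of a pre-map `f : Γ → Λ` over a vertex `w` of `Λ`: the subgraph
of `Γ` with vertex set `f_v⁻¹(w)` and arc set the arcs outside the image of `f_a` with
both endpoints in `f_v⁻¹(w)`. -/
noncomputable def fiber {G H : CGraph} (f : PreMap G H) (w : H.V) : CGraph where
  V := {v : G.V // f.fv (some v) = some w}
  A := {a : G.A // FiberArc f w a}
  fintypeV := Fintype.ofFinite _
  fintypeA := Fintype.ofFinite _
  dag a := ⟨G.dag a.1, a.2.2.1, by rw [G.dag_dag]; exact a.2.1, a.2.2.2.2, by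
    rw [G.dag_dag]; exact a.2.2.2.1⟩
  dag_dag a := Subtype.ext (G.dag_dag a.1)
  dag_ne a h := G.dag_ne a.1 (congrArg Subtype.val h)
  t a := some ⟨a.2.2.2.1.choose, a.2.2.2.1.choose_spec.2⟩

end CGraph

/-!
STATEMENT 13: For a combinatorial graph map `f : Γ → Λ` between connected graphs and
any vertex `w` of `Λ` lying in the image of `f_v`, the fiber subgraph `f⁻¹(w)` is a
connected graph.
-/

open CGraph in
private theorem fiber_t_eq {G H : CGraph} (f : PreMap G H) (w : H.V)
    (a : (fiber f w).A) (u : G.V) (hu : G.t a.1 = some u) :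
    ∃ hv : f.fv (some u) = some w, (fiber f w).t a = some ⟨u, hv⟩ := by
  have h := a.2.2.2.1
  have h1 := h.choose_spec.1
  have h2 := h.choose_spec.2
  have heq : h.choose = u := (Option.some.inj (hu.symm.trans h1)).symm
  subst heq
  exact ⟨h2, rfl⟩

open CGraph in
private theorem fibCollapse {G H : CGraph} {f : PreMap G H} (hf : IsGraphMap f)
    {c : G.A} (hc : c ∉ Set.range f.fa) :
    f.fv (G.t (G.dag c)) = f.fv (G.t c) := by
  obtain ⟨l, hl⟩ := hf.2.2.1 c
  have hnil : l = [] := by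
    apply List.eq_nil_iff_forall_not_mem.mpr
    intro b hb
    exact hc ⟨b, (hl.1 b).mp hb⟩
  subst hnil
  exact hl.2.2.1

open CGraph in
private theorem path_conn {G H : CGraph} {f : PreMap G H} (hf : IsGraphMap f) (w : H.V)
    (l : List G.A) : ∀ (v v' : G.V), (∀ c ∈ l, c ∉ Set.range f.fa) →
    G.IsPath l (some v) (some v') → ∀ (hv : f.fv (some v) = some w)
    (hv' : f.fv (some v') = some w),
    Relation.EqvGen (fiber f w).Touch (Sum.inl ⟨v, hv⟩) (Sum.inl ⟨v', hv'⟩) := by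
  induction l with
  | nil =>
    intro v v' _ hp hv hv'
    have hvv : v = v' := Option.some.inj hp
    subst hvv
    exact Relation.EqvGen.refl _
  | cons c l ih =>
    intro v v' hout hp hv hv'
    obtain ⟨hdc, hrest⟩ := hp
    have hcout : c ∉ Set.range f.fa := hout c (List.mem_cons_self (a := c) (l := l))
    have hdout : G.dag c ∉ Set.range f.fa := by
      rintro ⟨b, hb⟩
      exact hcout ⟨H.dag b, by rw [hf.2.1, hb, G.dag_dag]⟩
    have heq : f.fv (G.t c) = some w := by
      rw [← fibCollapse hf hcout, hdc, hv]
    obtain ⟨u, hu⟩ : ∃ u, G.t c = some u := by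
      cases h : G.t c with
      | none => rw [h, hf.1] at heq; exact absurd heq (by simp)
      | some u => exact ⟨u, rfl⟩
    have hfu : f.fv (some u) = some w := by rw [← hu]; exact heq
    have harc : FiberArc f w c :=
      ⟨hcout, hdout, ⟨u, hu, hfu⟩, ⟨v, hdc, hv⟩⟩
    set ahat : (fiber f w).A := ⟨c, harc⟩ with hahat
    obtain ⟨hv1, ht1⟩ := fiber_t_eq f w ahat u hu
    have hdagA : ((fiber f w).dag ahat).1 = G.dag c := rfl
    obtain ⟨hv2, ht2⟩ := fiber_t_eq f w ((fiber f w).dag ahat) v (by rw [hdagA, hdc])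
    have e1 : (fiber f w).Touch (Sum.inr ((fiber f w).dag ahat)) (Sum.inl ⟨v, hv2⟩) :=
      Touch.incid _ _ ht2
    have e2 : (fiber f w).Touch (Sum.inr ahat) (Sum.inr ((fiber f w).dag ahat)) :=
      Touch.dag ahat
    have e3 : (fiber f w).Touch (Sum.inr ahat) (Sum.inl ⟨u, hv1⟩) :=
      Touch.incid _ _ ht1
    have step1 : Relation.EqvGen (fiber f w).Touch (Sum.inl ⟨v, hv⟩) (Sum.inl ⟨u, hfu⟩) :=
      Relation.EqvGen.trans _ _ _
        (Relation.EqvGen.trans _ _ _ (Relation.EqvGen.symm _ _ (Relation.EqvGen.rel _ _ e1))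
          (Relation.EqvGen.symm _ _ (Relation.EqvGen.rel _ _ e2)))
        (Relation.EqvGen.rel _ _ e3)
    have step2 := ih u v' (fun d hd => hout d (List.mem_cons_of_mem _ hd))
      (by rw [← hu]; exact hrest) hfu hv'
    exact Relation.EqvGen.trans _ _ _ step1 step2

open CGraph in
theorem fiber_connected (G H : CGraph) (hG : G.Connected) (hH : H.Connected)
    (f : PreMap G H) (hf : IsGraphMap f) (w : H.V)
    (hw : ∃ v : G.V, f.fv (some v) = some w) :
    (fiber f w).Connected := by
  obtain ⟨v₀, hv₀⟩ := hw
  refine ⟨⟨Sum.inl ⟨v₀, hv₀⟩⟩, ?_⟩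
  have toVert : ∀ x : (fiber f w).V ⊕ (fiber f w).A,
      ∃ v : (fiber f w).V, Relation.EqvGen (fiber f w).Touch x (Sum.inl v) := by
    intro x
    match x with
    | Sum.inl v => exact ⟨v, Relation.EqvGen.refl _⟩
    | Sum.inr a =>
      obtain ⟨u, hu⟩ := a.2.2.2.1
      obtain ⟨h1, h2⟩ := fiber_t_eq f w a u hu.1
      exact ⟨⟨u, h1⟩, Relation.EqvGen.rel _ _ (Touch.incid a ⟨u, h1⟩ h2)⟩
  have vertConn : ∀ v v' : (fiber f w).V,
      Relation.EqvGen (fiber f w).Touch (Sum.inl v) (Sum.inl v') := by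
    rintro ⟨v, hv⟩ ⟨v', hv'⟩
    obtain ⟨l, hl1, hl2⟩ := hf.2.2.2.1 v v' (hv.trans hv'.symm) (by rw [hv]; simp)
    exact path_conn hf w l v v' hl1 hl2 hv hv'
  intro x y
  obtain ⟨vx, hx⟩ := toVert x
  obtain ⟨vy, hy⟩ := toVert y
  exact Relation.EqvGen.trans _ _ _ hx
    (Relation.EqvGen.trans _ _ _ (vertConn vx vy) (Relation.EqvGen.symm _ _ hy))
end
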